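/- arXiv:1105.3187 — 2 statements merged into one kernel-verified Lean document; each statement's English description precedes it below -/
import Mathlib

section
/- Let r ∈ (0,1) and let f : 𝔸_r → ℂ∖{0} be an injective holomorphic function such that I(f∘γ) = I(γ) for every closed curve γ ⊂ 𝔸_r. Then for all R and z with r < R < |z| < 1, the point f(z) lies in the exterior of the Jordan curve f(C(0,R)); that is, ind(f∘C(0,R), f(z)) = 0, where C(0,R) := {ζ ∈ ℂ : |ζ| = R} is the circle of radius R about 0. -/
open MeasureTheory Set Filter Metric
open scoped ENNReal NNReal Topology

noncomputable section

/-- The annulus `𝔸_r = {z : r < |z| < 1}`.  For `r = 0` this is the punctured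
unit disk `𝔻*`. -/
def stdAnnulus (r : ℝ) : Set ℂ := {z : ℂ | r < ‖z‖ ∧ ‖z‖ < 1}

/-- The exterior of the closed unit disk, `ℂ ∖ cl 𝔻`. -/
def extDisk : Set ℂ := {z : ℂ | 1 < ‖z‖}

/-- The punctured plane `ℂ* = ℂ ∖ {0}`. -/
def punctPlane : Set ℂ := {z : ℂ | z ≠ 0}

/-- `ω(r) = -π / log r` for `r ∈ (0,1)`, and `ω(0) = 0`. -/
def omegaFun (r : ℝ) : ℝ := if r = 0 then 0 else -Real.pi / Real.log r

/-- `f ∈ AC^d([0,∞))`: `f` is locally absolutely continuous on `[0,∞)` with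
(a.e.) derivative of class `L^d_loc`; the derivative is represented by a
function `g` via the fundamental theorem of calculus. -/
def ACd (d : ℝ≥0∞) (f : ℝ → ℝ) : Prop :=
  ∃ g : ℝ → ℝ,
    (∀ T : ℝ, 0 < T → MemLp g d (volume.restrict (Icc (0:ℝ) T))) ∧
    ∀ a b : ℝ, 0 ≤ a → a ≤ b → f b - f a = ∫ t in a..b, g t

/-- A (doubly connected) canonical domain system of order `d`: a family of
annuli `D_t = 𝔸_{r t}` such that `t ↦ ω(r t)` is non-increasing and of class
`AC^d` on `[0,∞)`. -/
structure CanonicalDomainSystem (d : ℝ≥0∞) where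
  r : ℝ → ℝ
  r_nonneg : ∀ t : ℝ, 0 ≤ t → 0 ≤ r t
  r_lt_one : ∀ t : ℝ, 0 ≤ t → r t < 1
  omega_anti : ∀ ⦃s t : ℝ⦄, 0 ≤ s → s ≤ t → omegaFun (r t) ≤ omegaFun (r s)
  omega_ACd : ACd d fun t => omegaFun (r t)

/-- A Loewner chain of order `d` over the canonical domain system `D`. -/
structure IsLoewnerChain (d : ℝ≥0∞) (D : CanonicalDomainSystem d) (f : ℝ → ℂ → ℂ) : Prop where
  holo : ∀ t : ℝ, 0 ≤ t → DifferentiableOn ℂ (f t) (stdAnnulus (D.r t))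
  inj : ∀ t : ℝ, 0 ≤ t → InjOn (f t) (stdAnnulus (D.r t))
  mono : ∀ ⦃s t : ℝ⦄, 0 ≤ s → s ≤ t →
    f s '' stdAnnulus (D.r s) ⊆ f t '' stdAnnulus (D.r t)
  lc3 : ∀ S T : ℝ, 0 ≤ S → S ≤ T → ∀ K : Set ℂ, IsCompact K → K ⊆ stdAnnulus (D.r S) →
    ∃ k : ℝ → ℝ, (∀ x, 0 ≤ k x) ∧ MemLp k d (volume.restrict (Icc S T)) ∧
      ∀ z ∈ K, ∀ s t : ℝ, S ≤ s → s ≤ t → t ≤ T →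
        ‖f s z - f t z‖ ≤ ∫ ξ in s..t, k ξ

/-- An evolution family of order `d` over the canonical domain system `D`. -/
structure IsEvolutionFamily (d : ℝ≥0∞) (D : CanonicalDomainSystem d)
    (φ : ℝ → ℝ → ℂ → ℂ) : Prop where
  holo : ∀ ⦃s t : ℝ⦄, 0 ≤ s → s ≤ t → DifferentiableOn ℂ (φ s t) (stdAnnulus (D.r s))
  mapsTo : ∀ ⦃s t : ℝ⦄, 0 ≤ s → s ≤ t →
    MapsTo (φ s t) (stdAnnulus (D.r s)) (stdAnnulus (D.r t))
  ef1 : ∀ s : ℝ, 0 ≤ s → ∀ z ∈ stdAnnulus (D.r s), φ s s z = z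
  ef2 : ∀ ⦃s u t : ℝ⦄, 0 ≤ s → s ≤ u → u ≤ t → ∀ z ∈ stdAnnulus (D.r s),
    φ s t z = φ u t (φ s u z)
  ef3 : ∀ S T : ℝ, 0 ≤ S → S ≤ T → ∀ z ∈ stdAnnulus (D.r S),
    ∃ k : ℝ → ℝ, (∀ x, 0 ≤ k x) ∧ MemLp k d (volume.restrict (Icc S T)) ∧
      ∀ s u t : ℝ, S ≤ s → s ≤ u → u ≤ t → t ≤ T →
        ‖φ s u z - φ s t z‖ ≤ ∫ ξ in u..t, k ξ

/-- The domain `𝒟 = {(z,t) : t ≥ 0, z ∈ D_t}` of a weak holomorphic vector field. -/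
def vfDomain {d : ℝ≥0∞} (D : CanonicalDomainSystem d) : Set (ℂ × ℝ) :=
  {p : ℂ × ℝ | 0 ≤ p.2 ∧ p.1 ∈ stdAnnulus (D.r p.2)}

/-- A weak holomorphic vector field of order `d` over `D` (we regard `G` as a
function of `(z, t)` written `G z t`). -/
structure IsWeakHolVF (d : ℝ≥0∞) (D : CanonicalDomainSystem d) (G : ℂ → ℝ → ℂ) : Prop where
  meas : ∀ z : ℂ, Measurable fun t : {t : ℝ // 0 ≤ t ∧ z ∈ stdAnnulus (D.r t)} => G z t.1
  holo : ∀ t : ℝ, 0 ≤ t → DifferentiableOn ℂ (fun z => G z t) (stdAnnulus (D.r t))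
  bound : ∀ K : Set (ℂ × ℝ), IsCompact K → K ⊆ vfDomain D →
    ∃ k : ℝ → ℝ, (∀ x, 0 ≤ k x) ∧ MemLp k d (volume.restrict (Prod.snd '' K)) ∧
      ∀ p ∈ K, ‖G p.1 p.2‖ ≤ k p.2

/-- `G` is semicomplete: for every initial condition the Carathéodory initial
value problem (in integral form) has a solution defined on all of `[s,∞)`. -/
def IsSemicomplete {d : ℝ≥0∞} (D : CanonicalDomainSystem d) (G : ℂ → ℝ → ℂ) : Prop :=
  ∀ s : ℝ, 0 ≤ s → ∀ z ∈ stdAnnulus (D.r s),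
    ∃ w : ℝ → ℂ, w s = z ∧ (∀ t : ℝ, s ≤ t → w t ∈ stdAnnulus (D.r t)) ∧
      ∀ t : ℝ, s ≤ t → w t = z + ∫ ξ in s..t, G (w ξ) ξ

/-- `γ` is a closed curve (parametrized by `[0,1]`) contained in `A`. -/
def IsClosedCurveIn (γ : ℝ → ℂ) (A : Set ℂ) : Prop :=
  ContinuousOn γ (Icc 0 1) ∧ γ 0 = γ 1 ∧ ∀ t ∈ Icc (0:ℝ) 1, γ t ∈ A

/-- The closed curve `γ` has index (winding number) `n` about the point `w`,
expressed via a continuous logarithm of `γ - w`. -/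
def HasWindingNumber (γ : ℝ → ℂ) (w : ℂ) (n : ℤ) : Prop :=
  ∃ g : ℝ → ℂ, ContinuousOn g (Icc 0 1) ∧
    (∀ t ∈ Icc (0:ℝ) 1, γ t - w = Complex.exp (g t)) ∧
    g 1 - g 0 = 2 * Real.pi * Complex.I * n

/-- `I(f ∘ γ) = I(γ)` for every closed curve `γ` in `A`: `f` preserves the
index about the origin of closed curves in `A`. -/
def PreservesWinding (f : ℂ → ℂ) (A : Set ℂ) : Prop :=
  ∀ γ : ℝ → ℂ, IsClosedCurveIn γ A → ∀ n : ℤ,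
    (HasWindingNumber γ 0 n ↔ HasWindingNumber (fun t => f (γ t)) 0 n)

/-- The Loewner chain `f` is associated with the evolution family `φ`:
`f_s = f_t ∘ φ_{s,t}`. -/
def AssociatedLC {d : ℝ≥0∞} (D : CanonicalDomainSystem d) (f : ℝ → ℂ → ℂ)
    (φ : ℝ → ℝ → ℂ → ℂ) : Prop :=
  ∀ s t : ℝ, 0 ≤ s → s ≤ t → ∀ z ∈ stdAnnulus (D.r s), f s z = f t (φ s t z)

/-- The union `⋃_{t ≥ 0} f_t(D_t)` of the ranges of a Loewner chain. -/
def chainUnion {d : ℝ≥0∞} (D : CanonicalDomainSystem d) (f : ℝ → ℂ → ℂ) : Set ℂ :=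
  ⋃ t ∈ Ici (0:ℝ), f t '' stdAnnulus (D.r t)

/-- The evolution family `φ` has Loewner range `Ω`, i.e. there is an associated
Loewner chain, preserving winding numbers, whose union of ranges is `Ω`.
(Taking `Ω = 𝔸_ρ`, `𝔻*`, `ℂ ∖ cl 𝔻`, `ℂ*`, this defines the conformal types
I, II, III, IV respectively.) -/
def HasConformalType {d : ℝ≥0∞} (D : CanonicalDomainSystem d) (φ : ℝ → ℝ → ℂ → ℂ)
    (Ω : Set ℂ) : Prop :=
  ∃ f : ℝ → ℂ → ℂ, IsLoewnerChain d D f ∧ AssociatedLC D f φ ∧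
    (∀ t : ℝ, 0 ≤ t → PreservesWinding (f t) (stdAnnulus (D.r t))) ∧
    chainUnion D f = Ω

/-- `φ s t → 0` as `t → +∞`, uniformly on compact subsets of `D_s`. -/
def ConvergesToZeroOnCompacta {d : ℝ≥0∞} (D : CanonicalDomainSystem d)
    (φ : ℝ → ℝ → ℂ → ℂ) (s : ℝ) : Prop :=
  ∀ K : Set ℂ, IsCompact K → K ⊆ stdAnnulus (D.r s) →
    TendstoUniformlyOn (fun t z => φ s t z) (fun _ => 0) atTop K

/-- `N(f)`: the free term of the Laurent expansion of `f`, holomorphic on the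
annulus `𝔸_r`, computed as a mean value over the circle of radius `(1+r)/2`. -/
def freeTerm (r : ℝ) (f : ℂ → ℂ) : ℂ :=
  (2 * Real.pi : ℂ)⁻¹ *
    ∫ θ in (0:ℝ)..(2 * Real.pi), f ((((1 + r) / 2 : ℝ) : ℂ) * Complex.exp (θ * Complex.I))

/-- The Villat kernel `K_r`. -/
def villatKernel (r : ℝ) (z : ℂ) : ℂ :=
  (1 + z) / (1 - z) +
    ∑' ν : ℕ,
      ((1 + (r : ℂ) ^ (2 * (ν + 1)) * z) / (1 - (r : ℂ) ^ (2 * (ν + 1)) * z) +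
        (1 + z / (r : ℂ) ^ (2 * (ν + 1))) / (1 - z / (r : ℂ) ^ (2 * (ν + 1))))

/-- The class `V_r`: for `r ∈ (0,1)`, holomorphic functions on `𝔸_r` given by
the Villat-kernel representation with a pair of positive Borel measures on the
unit circle of total mass one; for `r = 0`, the (normalized) Carathéodory class
on the unit disk. -/
def MemClassV (r : ℝ) (p : ℂ → ℂ) : Prop :=
  (r = 0 →
    DifferentiableOn ℂ p (ball (0:ℂ) 1) ∧ p 0 = 1 ∧ ∀ z ∈ ball (0:ℂ) 1, 0 < (p z).re) ∧
  (r ≠ 0 →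
    DifferentiableOn ℂ p (stdAnnulus r) ∧
    ∃ μ₁ μ₂ : Measure ℂ,
      μ₁ {ξ : ℂ | ‖ξ‖ ≠ 1} = 0 ∧ μ₂ {ξ : ℂ | ‖ξ‖ ≠ 1} = 0 ∧
      μ₁ univ + μ₂ univ = 1 ∧
      ∀ z ∈ stdAnnulus r,
        p z = (∫ ξ, villatKernel r (z / ξ) ∂μ₁) +
          ∫ ξ, (1 - villatKernel r ((r : ℂ) * ξ / z)) ∂μ₂)
lemma isOpen_stdAnnulus (r : ℝ) : IsOpen (stdAnnulus r) := by
  have : stdAnnulus r = (‖·‖) ⁻¹' Ioo r 1 := by ext z; simp [stdAnnulus]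
  rw [this]; exact isOpen_Ioo.preimage continuous_norm

lemma sphere_subset_stdAnnulus {r ρ : ℝ} (h1 : r < ρ) (h2 : ρ < 1) :
    sphere (0:ℂ) ρ ⊆ stdAnnulus r := by
  intro ζ hζ
  rw [mem_sphere_zero_iff_norm] at hζ
  exact ⟨hζ ▸ h1, hζ ▸ h2⟩

lemma closedAnn_subset_stdAnnulus {r ρ₁ ρ₂ : ℝ} (h1 : r < ρ₁) (h2 : ρ₂ < 1) :
    closedBall (0:ℂ) ρ₂ \ ball (0:ℂ) ρ₁ ⊆ stdAnnulus r := by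
  rintro ζ ⟨hc, hb⟩
  rw [mem_closedBall_zero_iff] at hc
  rw [mem_ball_zero_iff] at hb
  push_neg at hb
  exact ⟨lt_of_lt_of_le h1 hb, lt_of_le_of_lt hc h2⟩

lemma isPreconnected_annulus {a b : ℝ} (ha : 0 ≤ a) :
    IsPreconnected {z : ℂ | a < ‖z‖ ∧ ‖z‖ < b} := by
  have key : {z : ℂ | a < ‖z‖ ∧ ‖z‖ < b}
      = (fun p : ℝ × ℝ => (p.1 : ℂ) * Complex.exp (p.2 * Complex.I)) '' (Ioo a b ×ˢ univ) := by
    ext z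
    constructor
    · rintro ⟨h1, h2⟩
      refine ⟨⟨‖z‖, Complex.arg z⟩, ⟨⟨h1, h2⟩, trivial⟩, ?_⟩
      simpa using Complex.norm_mul_exp_arg_mul_I z
    · rintro ⟨⟨ρ, θ⟩, ⟨⟨hρ1, hρ2⟩, -⟩, rfl⟩
      have h0 : (0:ℝ) ≤ ρ := le_of_lt (lt_of_le_of_lt ha hρ1)
      simp only [mem_setOf_eq, norm_mul, Complex.norm_exp]
      simp [Complex.norm_real, Real.norm_eq_abs, abs_of_nonneg h0, hρ1, hρ2]
  rw [key]
  refine IsPreconnected.image ?_ _ ?_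
  · exact ((convex_Ioo a b).prod convex_univ).isPreconnected
  · refine Continuous.continuousOn ?_
    exact (Complex.continuous_ofReal.comp continuous_fst).mul
      ((Complex.continuous_ofReal.comp continuous_snd).mul continuous_const).cexp

/-- A continuous integer-valued function on `[a,b]` takes the same value at endpoints. -/
lemma int_valued_eq {a b : ℝ} (hab : a ≤ b) {g : ℝ → ℝ} (hc : ContinuousOn g (Icc a b))
    (hint : ∀ t ∈ Icc a b, ∃ n : ℤ, g t = n) : g a = g b := by
  by_contra hne
  have ha : a ∈ Icc a b := ⟨le_rfl, hab⟩
  have hb : b ∈ Icc a b := ⟨hab, le_rfl⟩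
  obtain ⟨na, hna⟩ := hint a ha
  obtain ⟨nb, hnb⟩ := hint b hb
  rcases lt_or_gt_of_ne hne with h | h
  · have h1 : (na : ℝ) < nb := by rw [← hna, ← hnb]; exact h
    have h2 : na < nb := by exact_mod_cast h1
    have hmid : g b - 1/2 ∈ Icc (g a) (g b) := by
      constructor
      · rw [hna, hnb]
        have : (na : ℝ) ≤ nb - 1 := by exact_mod_cast Int.le_sub_one_of_lt h2
        linarith
      · linarith
    obtain ⟨t, ht, hgt⟩ := intermediate_value_Icc hab hc hmid
    obtain ⟨nt, hnt⟩ := hint t ht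
    have : (2*(nt:ℝ)) = 2*nb - 1 := by rw [hnt, hnb] at hgt; linarith
    have : (2*nt : ℤ) = 2*nb - 1 := by exact_mod_cast this
    omega
  · have h1 : (nb : ℝ) < na := by rw [← hna, ← hnb]; exact h
    have h2 : nb < na := by exact_mod_cast h1
    have hmid : g a - 1/2 ∈ Icc (g b) (g a) := by
      constructor
      · rw [hna, hnb]
        have : (nb : ℝ) ≤ na - 1 := by exact_mod_cast Int.le_sub_one_of_lt h2
        linarith
      · linarith
    obtain ⟨t, ht, hgt⟩ := intermediate_value_Icc' hab hc hmid
    obtain ⟨nt, hnt⟩ := hint t ht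
    have : (2*(nt:ℝ)) = 2*na - 1 := by rw [hnt, hna] at hgt; linarith
    have : (2*nt : ℤ) = 2*na - 1 := by exact_mod_cast this
    omega

/-- A continuous function on `[a,b]` with values in `2πiℤ` takes the same value at endpoints. -/
lemma twopii_int_valued_eq {a b : ℝ} (hab : a ≤ b) {F : ℝ → ℂ} (hc : ContinuousOn F (Icc a b))
    (hint : ∀ t ∈ Icc a b, ∃ n : ℤ, F t = 2 * Real.pi * Complex.I * n) : F a = F b := by
  have him : ∀ t ∈ Icc a b, ∃ n : ℤ, (F t).im / (2 * Real.pi) = n := by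
    intro t ht
    obtain ⟨n, hn⟩ := hint t ht
    refine ⟨n, ?_⟩
    rw [hn]
    have : (2 * (Real.pi:ℂ) * Complex.I * n).im = 2 * Real.pi * n := by simp
    rw [show ((2:ℂ) * Real.pi * Complex.I * n) = 2 * (Real.pi:ℂ) * Complex.I * n by ring, this]
    field_simp
  have hcont : ContinuousOn (fun t => (F t).im / (2 * Real.pi)) (Icc a b) :=
    (Complex.continuous_im.comp_continuousOn hc).div_const _
  have hend := int_valued_eq hab hcont him
  obtain ⟨na, hna⟩ := hint a ⟨le_rfl, hab⟩
  obtain ⟨nb, hnb⟩ := hint b ⟨hab, le_rfl⟩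
  have h2π : (2 * Real.pi : ℝ) ≠ 0 := by positivity
  have hx : na = nb := by
    rw [hna, hnb] at hend
    have e1 : ((2:ℂ) * Real.pi * Complex.I * na).im = 2 * Real.pi * na := by simp
    have e2 : ((2:ℂ) * Real.pi * Complex.I * nb).im = 2 * Real.pi * nb := by simp
    rw [e1, e2] at hend
    field_simp at hend
    exact_mod_cast hend
  rw [hna, hnb, hx]

/-- Uniqueness of winding numbers. -/
lemma hwn_unique {γ : ℝ → ℂ} {w : ℂ} {n n' : ℤ}
    (h1 : HasWindingNumber γ w n) (h2 : HasWindingNumber γ w n') : n = n' := by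
  obtain ⟨g, hgc, hge, hgn⟩ := h1
  obtain ⟨g', hgc', hge', hgn'⟩ := h2
  have key : ∀ t ∈ Icc (0:ℝ) 1, ∃ k : ℤ, g t - g' t = 2 * Real.pi * Complex.I * k := by
    intro t ht
    have : Complex.exp (g t) = Complex.exp (g' t) := by rw [← hge t ht, ← hge' t ht]
    rw [Complex.exp_eq_exp_iff_exists_int] at this
    obtain ⟨k, hk⟩ := this
    exact ⟨k, by rw [hk]; ring⟩
  have hc : ContinuousOn (fun t => g t - g' t) (Icc 0 1) := hgc.sub hgc'
  have := twopii_int_valued_eq zero_le_one hc key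
  have heq : g 1 - g 0 = g' 1 - g' 0 := by
    have h01 : g 0 - g' 0 = g 1 - g' 1 := this
    linear_combination -h01
  rw [hgn, hgn'] at heq
  have h2πI : (2 * (Real.pi:ℂ) * Complex.I) ≠ 0 := by
    simp [Complex.ext_iff, Real.pi_ne_zero]
  have : (n:ℂ) = n' := by
    exact mul_left_cancel₀ h2πI (by linear_combination heq)
  exact_mod_cast this

noncomputable def wint (f : ℂ → ℂ) (ρ : ℝ) (q : ℂ) : ℂ :=
  ∮ ζ in C(0, ρ), deriv f ζ / (f ζ - q)

lemma bridge {r : ℝ} (hr0 : 0 < r) (hr1 : r < 1) {f : ℂ → ℂ}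
    (hholo : DifferentiableOn ℂ f (stdAnnulus r)) {ρ : ℝ} (hρ1 : r < ρ) (hρ2 : ρ < 1)
    {q : ℂ} (hq : ∀ θ : ℝ, f (circleMap 0 ρ θ) ≠ q) :
    ∃ G : ℝ → ℂ, Continuous G ∧ (∀ θ : ℝ, f (circleMap 0 ρ θ) - q = Complex.exp (G θ)) ∧
      G (2 * Real.pi) - G 0 = wint f ρ q := by
  have hρ0 : (0:ℝ) < ρ := lt_trans hr0 hρ1
  have hopen := isOpen_stdAnnulus r
  have hmem : ∀ θ : ℝ, circleMap 0 ρ θ ∈ stdAnnulus r := fun θ =>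
    sphere_subset_stdAnnulus hρ1 hρ2 (circleMap_mem_sphere 0 hρ0.le θ)
  have hanal : AnalyticOnNhd ℂ f (stdAnnulus r) := hholo.analyticOnNhd hopen
  have hdc : ContinuousOn (deriv f) (stdAnnulus r) := hanal.deriv.continuousOn
  have hccm : Continuous (circleMap 0 ρ) := continuous_circleMap 0 ρ
  have hφ : Continuous fun θ => f (circleMap 0 ρ θ) :=
    hholo.continuousOn.comp_continuous hccm hmem
  have hφ' : Continuous fun θ => deriv f (circleMap 0 ρ θ) :=
    hdc.comp_continuous hccm hmem
  have hsub : ∀ θ : ℝ, f (circleMap 0 ρ θ) - q ≠ 0 := fun θ => sub_ne_zero.2 (hq θ)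
  set k : ℝ → ℂ :=
    fun θ => deriv f (circleMap 0 ρ θ) * (circleMap 0 ρ θ * Complex.I)
      / (f (circleMap 0 ρ θ) - q) with hk_def
  have hk : Continuous k :=
    (hφ'.mul (hccm.mul continuous_const)).div (hφ.sub continuous_const) hsub
  have hder : ∀ θ : ℝ, HasDerivAt (fun θ => f (circleMap 0 ρ θ))
      (deriv f (circleMap 0 ρ θ) * (circleMap 0 ρ θ * Complex.I)) θ := by
    intro θ
    have h1 : HasDerivAt (circleMap 0 ρ) (circleMap 0 ρ θ * Complex.I) θ :=
      hasDerivAt_circleMap 0 ρ θ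
    have h2 : DifferentiableAt ℂ f (circleMap 0 ρ θ) :=
      hholo.differentiableAt (hopen.mem_nhds (hmem θ))
    have := h2.hasDerivAt.scomp θ h1
    exact this.congr_deriv (by rw [smul_eq_mul]; ring)
  set G₀ : ℝ → ℂ := fun θ => ∫ s in (0:ℝ)..θ, k s with hG₀_def
  have hG₀ : ∀ θ : ℝ, HasDerivAt G₀ (k θ) θ := fun θ =>
    (hk.integral_hasStrictDerivAt 0 θ).hasDerivAt
  have hG₀c : Continuous G₀ :=
    continuous_iff_continuousAt.2 fun θ => (hG₀ θ).continuousAt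
  set F : ℝ → ℂ := fun θ => (f (circleMap 0 ρ θ) - q) * Complex.exp (-G₀ θ) with hF_def
  have hF : ∀ θ : ℝ, HasDerivAt F 0 θ := by
    intro θ
    have hE : HasDerivAt (fun θ => Complex.exp (-G₀ θ))
        (Complex.exp (-(G₀ θ)) * -(k θ)) θ := ((hG₀ θ).neg).cexp
    have h3 := ((hder θ).sub_const q).mul hE
    refine h3.congr_deriv ?_
    have hne := hsub θ
    have hkm : k θ * (f (circleMap 0 ρ θ) - q) = deriv f (circleMap 0 ρ θ) * (circleMap 0 ρ θ * Complex.I) :=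
      div_mul_cancel₀ _ hne
    linear_combination (-Complex.exp (-G₀ θ)) * hkm
  have hFconst : ∀ θ : ℝ, F θ = F 0 := by
    intro θ
    exact is_const_of_deriv_eq_zero (fun x => (hF x).differentiableAt)
      (fun x => (hF x).deriv) θ 0
  set c₀ : ℂ := Complex.log (f (circleMap 0 ρ 0) - q) with hc₀_def
  have hc₀ : Complex.exp c₀ = f (circleMap 0 ρ 0) - q := Complex.exp_log (hsub 0)
  refine ⟨fun θ => c₀ + G₀ θ, continuous_const.add hG₀c, ?_, ?_⟩
  · intro θ
    have h1 : F θ = F 0 := hFconst θ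
    have hG00 : G₀ 0 = 0 := intervalIntegral.integral_same
    have h2 : (f (circleMap 0 ρ θ) - q) * Complex.exp (-G₀ θ)
        = (f (circleMap 0 ρ 0) - q) := by
      rw [hF_def] at h1; simpa [hG00] using h1
    have h3 : f (circleMap 0 ρ θ) - q
        = (f (circleMap 0 ρ 0) - q) * Complex.exp (G₀ θ) := by
      rw [← h2, mul_assoc, ← Complex.exp_add]
      simp
    rw [h3, Complex.exp_add, hc₀]
  · have hG00 : G₀ 0 = 0 := intervalIntegral.integral_same
    have : wint f ρ q = ∫ s in (0:ℝ)..(2 * Real.pi), k s := by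
      rw [wint, circleIntegral]
      apply intervalIntegral.integral_congr
      intro s _
      simp only [deriv_circleMap, smul_eq_mul, hk_def]
      ring
    simp [hG00, this, hG₀_def]

lemma wint_int {r : ℝ} (hr0 : 0 < r) (hr1 : r < 1) {f : ℂ → ℂ}
    (hholo : DifferentiableOn ℂ f (stdAnnulus r)) {ρ : ℝ} (hρ1 : r < ρ) (hρ2 : ρ < 1)
    {q : ℂ} (hq : ∀ θ : ℝ, f (circleMap 0 ρ θ) ≠ q) :
    ∃ n : ℤ, wint f ρ q = 2 * Real.pi * Complex.I * n := by
  obtain ⟨G, hGc, hGe, hGv⟩ := bridge hr0 hr1 hholo hρ1 hρ2 hq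
  have hper : circleMap 0 ρ (2 * Real.pi) = circleMap 0 ρ 0 := by
    have := periodic_circleMap 0 ρ 0
    simpa using this
  have hexp : Complex.exp (G (2 * Real.pi)) = Complex.exp (G 0) := by
    rw [← hGe, ← hGe, hper]
  rw [Complex.exp_eq_exp_iff_exists_int] at hexp
  obtain ⟨n, hn⟩ := hexp
  exact ⟨n, by rw [← hGv, hn]; ring⟩

/-- The curve `t ↦ f (ρ e^{2πit})` has winding number `n` about `q` iff
`wint f ρ q = 2πi n`. -/
lemma wind_iff {r : ℝ} (hr0 : 0 < r) (hr1 : r < 1) {f : ℂ → ℂ}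
    (hholo : DifferentiableOn ℂ f (stdAnnulus r)) {ρ : ℝ} (hρ1 : r < ρ) (hρ2 : ρ < 1)
    {q : ℂ} (hq : ∀ θ : ℝ, f (circleMap 0 ρ θ) ≠ q) (n : ℤ) :
    HasWindingNumber (fun t : ℝ => f ((ρ:ℂ) * Complex.exp (2 * Real.pi * Complex.I * t))) q n
      ↔ wint f ρ q = 2 * Real.pi * Complex.I * n := by
  obtain ⟨G, hGc, hGe, hGv⟩ := bridge hr0 hr1 hholo hρ1 hρ2 hq
  have hcurve : ∀ t : ℝ, (ρ:ℂ) * Complex.exp (2 * Real.pi * Complex.I * t)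
      = circleMap 0 ρ (2 * Real.pi * t) := by
    intro t
    rw [circleMap_zero]
    congr 1
    push_cast
    ring
  have hfwd : ∀ m : ℤ, wint f ρ q = 2 * Real.pi * Complex.I * m →
      HasWindingNumber (fun t : ℝ => f ((ρ:ℂ) * Complex.exp (2 * Real.pi * Complex.I * t))) q m := by
    intro m hm
    refine ⟨fun t => G (2 * Real.pi * t), ?_, ?_, ?_⟩
    · exact (hGc.comp (continuous_const.mul continuous_id)).continuousOn
    · intro t _
      show f ((ρ:ℂ) * Complex.exp (2 * Real.pi * Complex.I * t)) - q
        = Complex.exp (G (2 * Real.pi * t))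
      rw [hcurve t]
      exact hGe _
    · show G (2 * Real.pi * 1) - G (2 * Real.pi * 0) = 2 * Real.pi * Complex.I * m
      rw [mul_one, mul_zero, hGv, hm]
  constructor
  · intro h
    obtain ⟨m, hm⟩ := wint_int hr0 hr1 hholo hρ1 hρ2 hq
    have := hfwd m hm
    have hnm : n = m := hwn_unique h this
    rw [hm, hnm]
  · exact hfwd n

lemma wint_transport {r : ℝ} (hr0 : 0 < r) (hr1 : r < 1) {f : ℂ → ℂ}
    (hholo : DifferentiableOn ℂ f (stdAnnulus r)) {ρ : ℝ} (hρ1 : r < ρ) (hρ2 : ρ < 1)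
    {q : ℝ → ℂ} (hqc : Continuous q)
    (hne : ∀ s θ : ℝ, f (circleMap 0 ρ θ) ≠ q s) (s₀ s₁ : ℝ) :
    wint f ρ (q s₀) = wint f ρ (q s₁) := by
  have hρ0 : (0:ℝ) < ρ := lt_trans hr0 hρ1
  have hopen := isOpen_stdAnnulus r
  have hmem : ∀ θ : ℝ, circleMap 0 ρ θ ∈ stdAnnulus r := fun θ =>
    sphere_subset_stdAnnulus hρ1 hρ2 (circleMap_mem_sphere 0 hρ0.le θ)
  have hanal : AnalyticOnNhd ℂ f (stdAnnulus r) := hholo.analyticOnNhd hopen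
  have hdc : ContinuousOn (deriv f) (stdAnnulus r) := hanal.deriv.continuousOn
  have hccm : Continuous (circleMap 0 ρ) := continuous_circleMap 0 ρ
  have hφ : Continuous fun θ => f (circleMap 0 ρ θ) :=
    hholo.continuousOn.comp_continuous hccm hmem
  have hφ' : Continuous fun θ => deriv f (circleMap 0 ρ θ) :=
    hdc.comp_continuous hccm hmem
  set W : ℝ → ℂ := fun s => wint f ρ (q s) with hW_def
  have hWint : ∀ s : ℝ, ∃ n : ℤ, W s = 2 * Real.pi * Complex.I * n := fun s =>
    wint_int hr0 hr1 hholo hρ1 hρ2 (fun θ => hne s θ)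
  have hWc : Continuous W := by
    have hF : Continuous (Function.uncurry fun (s θ : ℝ) =>
        deriv (circleMap 0 ρ) θ • (deriv f (circleMap 0 ρ θ) / (f (circleMap 0 ρ θ) - q s))) := by
      simp only [Function.uncurry, deriv_circleMap, smul_eq_mul]
      refine Continuous.mul ((hccm.comp continuous_snd).mul continuous_const) ?_
      refine Continuous.div (hφ'.comp continuous_snd)
        ((hφ.comp continuous_snd).sub (hqc.comp continuous_fst)) ?_
      intro p; exact sub_ne_zero.2 (hne p.1 p.2)
    exact intervalIntegral.continuous_parametric_intervalIntegral_of_continuous'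
      (μ := volume) hF 0 (2 * Real.pi)
  rcases le_total s₀ s₁ with h | h
  · exact twopii_int_valued_eq h hWc.continuousOn (fun t _ => hWint t)
  · exact (twopii_int_valued_eq h hWc.continuousOn (fun t _ => hWint t)).symm

lemma wint_radius {r : ℝ} (hr0 : 0 < r) (hr1 : r < 1) {f : ℂ → ℂ}
    (hholo : DifferentiableOn ℂ f (stdAnnulus r)) {ρ₁ ρ₂ : ℝ} (h1 : r < ρ₁) (h12 : ρ₁ ≤ ρ₂)
    (h2 : ρ₂ < 1) {q : ℂ}
    (hq : ∀ ζ ∈ closedBall (0:ℂ) ρ₂ \ ball (0:ℂ) ρ₁, f ζ ≠ q) :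
    wint f ρ₂ q = wint f ρ₁ q := by
  have hρ0 : (0:ℝ) < ρ₁ := lt_trans hr0 h1
  have hopen := isOpen_stdAnnulus r
  have hanal : AnalyticOnNhd ℂ f (stdAnnulus r) := hholo.analyticOnNhd hopen
  have hdc : ContinuousOn (deriv f) (stdAnnulus r) := hanal.deriv.continuousOn
  have hsub : closedBall (0:ℂ) ρ₂ \ ball (0:ℂ) ρ₁ ⊆ stdAnnulus r :=
    closedAnn_subset_stdAnnulus h1 h2
  refine Complex.circleIntegral_eq_of_differentiable_on_annulus_off_countable hρ0 h12 countable_empty ?_ ?_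
  · exact (hdc.mono hsub).div ((hholo.continuousOn.mono hsub).sub continuousOn_const)
      (fun ζ hζ => sub_ne_zero.2 (hq ζ hζ))
  · intro ζ hζ
    have hζ' : ζ ∈ closedBall (0:ℂ) ρ₂ \ ball (0:ℂ) ρ₁ := by
      obtain ⟨⟨hb, hcb⟩, -⟩ := hζ
      exact ⟨ball_subset_closedBall hb, fun hc => hcb (ball_subset_closedBall hc)⟩
    have hζA : ζ ∈ stdAnnulus r := hsub hζ'
    refine DifferentiableAt.div ?_ ?_ (sub_ne_zero.2 (hq ζ hζ'))
    · exact (hanal.deriv ζ hζA).differentiableAt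
    · exact (hholo.differentiableAt (hopen.mem_nhds hζA)).sub_const q

lemma wint_zero_of_gt {r : ℝ} (hr0 : 0 < r) (hr1 : r < 1) {f : ℂ → ℂ}
    (hholo : DifferentiableOn ℂ f (stdAnnulus r)) {ρ : ℝ} (hρ1 : r < ρ) (hρ2 : ρ < 1)
    {q : ℂ} (hq : ∀ θ : ℝ, ‖f (circleMap 0 ρ θ)‖ < ‖q‖) :
    wint f ρ q = 0 := by
  have hρ0 : (0:ℝ) < ρ := lt_trans hr0 hρ1
  have hopen := isOpen_stdAnnulus r
  have hmem : ∀ θ : ℝ, circleMap 0 ρ θ ∈ stdAnnulus r := fun θ =>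
    sphere_subset_stdAnnulus hρ1 hρ2 (circleMap_mem_sphere 0 hρ0.le θ)
  have hanal : AnalyticOnNhd ℂ f (stdAnnulus r) := hholo.analyticOnNhd hopen
  have hdc : ContinuousOn (deriv f) (stdAnnulus r) := hanal.deriv.continuousOn
  have hsph : sphere (0:ℂ) ρ ⊆ stdAnnulus r := sphere_subset_stdAnnulus hρ1 hρ2
  have hq0 : 0 < ‖q‖ := lt_of_le_of_lt (norm_nonneg _) (hq 0)
  have hcs : IsCompact (sphere (0:ℂ) ρ) := isCompact_sphere 0 ρ
  have hnes : (sphere (0:ℂ) ρ).Nonempty := by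
    refine ⟨(ρ:ℂ), ?_⟩
    simp [mem_sphere_zero_iff_norm, Complex.norm_real, Real.norm_eq_abs, abs_of_pos hρ0]
  obtain ⟨ζC, hζC, hCmax⟩ := hcs.exists_isMaxOn hnes
    (continuous_norm.comp_continuousOn (hdc.mono hsph))
  obtain ⟨ζM, hζM, hMmax⟩ := hcs.exists_isMaxOn hnes
    (continuous_norm.comp_continuousOn (hholo.continuousOn.mono hsph))
  set Cf := ‖deriv f ζC‖ with hCf_def
  set Mf := ‖f ζM‖ with hMf_def
  have hCf0 : 0 ≤ Cf := norm_nonneg _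
  have hMf0 : 0 ≤ Mf := norm_nonneg _
  have hCfb : ∀ ζ ∈ sphere (0:ℂ) ρ, ‖deriv f ζ‖ ≤ Cf := fun ζ hζ => hCmax hζ
  have hMfb : ∀ ζ ∈ sphere (0:ℂ) ρ, ‖f ζ‖ ≤ Mf := fun ζ hζ => hMmax hζ
  set S : ℝ := (ρ * Cf + Mf) / ‖q‖ with hS_def
  have hS0 : 0 ≤ S := by positivity
  set q' : ℂ := q * (1 + (S:ℂ)) with hq'_def
  have htrans : wint f ρ q = wint f ρ q' := by
    set p : ℝ → ℂ := fun s => q * (1 + ((max 0 (min s S) : ℝ) : ℂ)) with hp_def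
    have hpath : Continuous p := by
      refine continuous_const.mul (continuous_const.add ?_)
      exact Complex.continuous_ofReal.comp (continuous_const.max (continuous_id.min continuous_const))
    have habs : ∀ s : ℝ, ‖q‖ ≤ ‖p s‖ := by
      intro s
      rw [hp_def]
      simp only [norm_mul]
      have h1 : (0:ℝ) ≤ max 0 (min s S) := le_max_left _ _
      have h2 : ‖1 + ((max 0 (min s S) : ℝ) : ℂ)‖ = 1 + max 0 (min s S) := by
        rw [show (1 + ((max 0 (min s S) : ℝ):ℂ)) = (((1 + max 0 (min s S) : ℝ)):ℂ) by push_cast; ring,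
          Complex.norm_real, Real.norm_eq_abs]
        exact abs_of_nonneg (by linarith)
      rw [h2]
      nlinarith [norm_nonneg q]
    have hne : ∀ s θ : ℝ, f (circleMap 0 ρ θ) ≠ p s := by
      intro s θ h
      have h1 := congrArg (‖·‖) h
      have h2 := habs s
      have h3 := hq θ
      rw [h1] at h3
      linarith
    have h := wint_transport hr0 hr1 hholo hρ1 hρ2 hpath hne 0 S
    have e0 : p 0 = q := by simp [hp_def, hS0]
    have e1 : p S = q' := by
      rw [hp_def, hq'_def]
      simp [min_self, max_eq_right hS0]
    rw [e0, e1] at h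
    exact h
  have habsq' : ‖q'‖ = (1 + S) * ‖q‖ := by
    rw [hq'_def, norm_mul]
    rw [show ((1:ℂ) + (S:ℂ)) = (((1 + S : ℝ)):ℂ) by push_cast; ring, Complex.norm_real, Real.norm_eq_abs,
      _root_.abs_of_nonneg (by linarith : (0:ℝ) ≤ 1 + S)]
    ring
  have hD : ‖q'‖ - Mf = ‖q‖ + ρ * Cf := by
    rw [habsq', hS_def]
    field_simp
    ring
  have hDpos : 0 < ‖q'‖ - Mf := by rw [hD]; positivity
  have hbound : ∀ ζ ∈ sphere (0:ℂ) ρ,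
      ‖deriv f ζ / (f ζ - q')‖ ≤ Cf / (‖q'‖ - Mf) := by
    intro ζ hζ
    rw [norm_div]
    have hden : ‖q'‖ - Mf ≤ ‖f ζ - q'‖ := by
      have h1 : ‖q'‖ - ‖f ζ‖ ≤ ‖q' - f ζ‖ := norm_sub_norm_le q' (f ζ)
      rw [norm_sub_rev] at h1
      have h2 : ‖f ζ‖ ≤ Mf := hMfb ζ hζ
      linarith
    have hnum : ‖deriv f ζ‖ ≤ Cf := by
      exact hCfb ζ hζ
    exact div_le_div₀ hCf0 hnum hDpos hden
  have hint := circleIntegral.norm_integral_le_of_norm_le_const hρ0.le hbound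
  have hfinal : ‖wint f ρ q‖ < 2 * Real.pi := by
    rw [htrans]
    calc ‖wint f ρ q'‖ ≤ 2 * Real.pi * ρ * (Cf / (‖q'‖ - Mf)) := hint
    _ < 2 * Real.pi := by
      rw [hD]
      rw [show 2 * Real.pi * ρ * (Cf / (‖q‖ + ρ * Cf)) =
        2 * Real.pi * (ρ * Cf / (‖q‖ + ρ * Cf)) by ring]
      have hlt : ρ * Cf / (‖q‖ + ρ * Cf) < 1 := by
        rw [div_lt_one (by positivity)]
        linarith
      nlinarith [Real.two_pi_pos]
  obtain ⟨n, hn⟩ := wint_int hr0 hr1 hholo hρ1 hρ2 (q := q) (fun θ h => by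
    have := congrArg (‖·‖) h
    have h3 := hq θ
    rw [this] at h3
    exact lt_irrefl _ h3)
  rw [hn] at hfinal ⊢
  have hnorm : ‖(2 * Real.pi * Complex.I * n : ℂ)‖ = 2 * Real.pi * |(n:ℝ)| := by
    simp only [norm_mul, Complex.norm_I, Complex.norm_real, Real.norm_eq_abs,
      Complex.norm_intCast, Complex.norm_two]
    rw [abs_of_pos Real.pi_pos]
    ring
  rw [hnorm] at hfinal
  have hn1 : |(n:ℝ)| < 1 := by nlinarith [Real.two_pi_pos]
  have hn2 : |n| < 1 := by exact_mod_cast (by rwa [← Int.cast_abs] at hn1 : ((|n|:ℤ):ℝ) < 1)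
  have hn3 := abs_lt.mp hn2
  have : n = 0 := by omega
  simp [this]

/-- If `|q|` is smaller than `|f|` on the circle, the winding integral equals that of `0`. -/
lemma wint_eq_wint_zero_of_lt {r : ℝ} (hr0 : 0 < r) (hr1 : r < 1) {f : ℂ → ℂ}
    (hholo : DifferentiableOn ℂ f (stdAnnulus r)) {ρ : ℝ} (hρ1 : r < ρ) (hρ2 : ρ < 1)
    {q : ℂ} (hq : ∀ θ : ℝ, ‖q‖ < ‖f (circleMap 0 ρ θ)‖) :
    wint f ρ q = wint f ρ 0 := by
  set p : ℝ → ℂ := fun s => q * (1 - ((max 0 (min s 1) : ℝ) : ℂ)) with hp_def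
  have hpath : Continuous p := by
    refine continuous_const.mul (continuous_const.sub ?_)
    exact Complex.continuous_ofReal.comp (continuous_const.max (continuous_id.min continuous_const))
  have habs : ∀ s : ℝ, ‖p s‖ ≤ ‖q‖ := by
    intro s
    rw [hp_def]
    simp only [norm_mul]
    have h1 : (0:ℝ) ≤ max 0 (min s 1) := le_max_left _ _
    have h1' : max 0 (min s 1) ≤ 1 := by
      apply max_le (by norm_num) (min_le_right _ _)
    have h2 : ‖1 - ((max 0 (min s 1) : ℝ) : ℂ)‖ = 1 - max 0 (min s 1) := by
      rw [show ((1:ℂ) - ((max 0 (min s 1) : ℝ):ℂ)) = (((1 - max 0 (min s 1) : ℝ)):ℂ) by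
        push_cast; ring, Complex.norm_real, Real.norm_eq_abs]
      exact _root_.abs_of_nonneg (by linarith)
    rw [h2]
    nlinarith [norm_nonneg q]
  have hne : ∀ s θ : ℝ, f (circleMap 0 ρ θ) ≠ p s := by
    intro s θ h
    have h1 := congrArg (‖·‖) h
    have h2 := habs s
    have h3 := hq θ
    rw [h1] at h3
    linarith
  have h := wint_transport hr0 hr1 hholo hρ1 hρ2 hpath hne 0 1
  have e0 : p 0 = q := by simp [hp_def]
  have e1 : p 1 = 0 := by simp [hp_def]
  rw [e0, e1] at h
  exact h

/-- The winding integral about `0` equals `2πi`, by the winding-preservation hypothesis. -/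
lemma wint_zero_val {r : ℝ} (hr0 : 0 < r) (hr1 : r < 1) {f : ℂ → ℂ}
    (hholo : DifferentiableOn ℂ f (stdAnnulus r))
    (hmaps : MapsTo f (stdAnnulus r) punctPlane)
    (hwind : PreservesWinding f (stdAnnulus r)) {ρ : ℝ} (hρ1 : r < ρ) (hρ2 : ρ < 1) :
    wint f ρ 0 = 2 * Real.pi * Complex.I := by
  have hρ0 : (0:ℝ) < ρ := lt_trans hr0 hρ1
  have hmem : ∀ θ : ℝ, circleMap 0 ρ θ ∈ stdAnnulus r := fun θ =>
    sphere_subset_stdAnnulus hρ1 hρ2 (circleMap_mem_sphere 0 hρ0.le θ)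
  set γ : ℝ → ℂ := fun t => (ρ:ℂ) * Complex.exp (2 * Real.pi * Complex.I * t) with hγ_def
  have hγabs : ∀ t : ℝ, ‖γ t‖ = ρ := by
    intro t
    rw [hγ_def]
    simp only [norm_mul, Complex.norm_exp]
    have : (2 * (Real.pi:ℂ) * Complex.I * t).re = 0 := by simp
    rw [show (2 * (Real.pi:ℂ) * Complex.I * (t:ℂ)) = 2 * (Real.pi:ℂ) * Complex.I * t by ring, this]
    simp [Complex.norm_real, Real.norm_eq_abs, _root_.abs_of_pos hρ0]
  have hγmem : ∀ t ∈ Icc (0:ℝ) 1, γ t ∈ stdAnnulus r := fun t _ =>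
    ⟨(hγabs t).symm ▸ hρ1, (hγabs t).symm ▸ hρ2⟩
  have hclosed : IsClosedCurveIn γ (stdAnnulus r) := by
    refine ⟨?_, ?_, hγmem⟩
    · exact (continuous_const.mul (continuous_const.mul Complex.continuous_ofReal).cexp).continuousOn
    · rw [hγ_def]
      simp only
      rw [show (2 * (Real.pi:ℂ) * Complex.I * ((0:ℝ):ℂ)) = 0 by push_cast; ring]
      rw [show (2 * (Real.pi:ℂ) * Complex.I * ((1:ℝ):ℂ)) = 2 * Real.pi * Complex.I by push_cast; ring]
      rw [Complex.exp_zero, Complex.exp_two_pi_mul_I]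
  have h1 : HasWindingNumber γ 0 1 := by
    refine ⟨fun t => ((Real.log ρ : ℝ) : ℂ) + 2 * Real.pi * Complex.I * t, ?_, ?_, ?_⟩
    · exact (continuous_const.add (continuous_const.mul Complex.continuous_ofReal)).continuousOn
    · intro t _
      rw [sub_zero, Complex.exp_add, hγ_def]
      congr 1
      rw [← Complex.ofReal_exp, Real.exp_log hρ0]
    · push_cast
      ring
  have h2 := (hwind γ hclosed 1).mp h1
  have hq : ∀ θ : ℝ, f (circleMap 0 ρ θ) ≠ 0 := fun θ => hmaps (hmem θ)
  have h3 := (wind_iff hr0 hr1 hholo hρ1 hρ2 hq 1).mp h2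
  rw [h3]
  push_cast
  ring

/-- Crossing lemma: moving the circle across `w` increases the winding integral at `f w`
by `2πi` times the (positive) order of the zero of `f - f w` at `w`. -/
lemma wint_crossing {r : ℝ} (hr0 : 0 < r) (hr1 : r < 1) {f : ℂ → ℂ}
    (hholo : DifferentiableOn ℂ f (stdAnnulus r)) (hinj : InjOn f (stdAnnulus r))
    {w : ℂ} (hw : w ∈ stdAnnulus r) {ρ₁ ρ₂ : ℝ} (h1 : r < ρ₁) (h1w : ρ₁ < ‖w‖)
    (hw2 : ‖w‖ < ρ₂) (h2 : ρ₂ < 1) :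
    ∃ m : ℕ, 1 ≤ m ∧
      wint f ρ₂ (f w) - wint f ρ₁ (f w) = 2 * Real.pi * Complex.I * m := by
  have hρ₁0 : (0:ℝ) < ρ₁ := lt_trans hr0 h1
  have hρ₂0 : (0:ℝ) < ρ₂ := lt_trans hρ₁0 (lt_trans h1w hw2)
  have hopen := isOpen_stdAnnulus r
  have hanal : AnalyticOnNhd ℂ f (stdAnnulus r) := hholo.analyticOnNhd hopen
  have hF : AnalyticAt ℂ (fun ζ => f ζ - f w) w := ((hanal w hw).sub analyticAt_const)
  have hnotev : ¬ ∀ᶠ ζ in 𝓝 w, f ζ - f w = 0 := by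
    intro hev
    have h3 : ∀ᶠ ζ in 𝓝[≠] w, (f ζ - f w = 0 ∧ ζ ∈ stdAnnulus r) ∧ ζ ≠ w := by
      refine Filter.Eventually.and ?_ self_mem_nhdsWithin
      exact (hev.and (hopen.eventually_mem hw)).filter_mono nhdsWithin_le_nhds
    obtain ⟨ζ, ⟨hζ0, hζA⟩, hζw⟩ := h3.exists
    exact hζw (hinj hζA hw (sub_eq_zero.mp hζ0))
  have horder : analyticOrderAt (fun ζ => f ζ - f w) w ≠ ⊤ := fun htop => hnotev (analyticOrderAt_eq_top.mp htop)
  obtain ⟨m, hm⟩ := WithTop.ne_top_iff_exists.mp horder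
  obtain ⟨g, hg_an, hgw, hev⟩ := hF.analyticOrderAt_eq_natCast.mp hm.symm
  have hm1 : 1 ≤ m := by
    rcases Nat.eq_zero_or_pos m with h0 | h; swap
    · exact h
    exfalso
    have := hev.self_of_nhds
    rw [h0] at this
    simp only [pow_zero, one_smul, sub_self] at this
    exact hgw this.symm
  set h : ℂ → ℂ := fun ζ => if ζ = w then g w else (f ζ - f w) / (ζ - w)^m with hh_def
  have hglobal : ∀ ζ ∈ stdAnnulus r, f ζ - f w = (ζ - w)^m * h ζ := by
    intro ζ hζ
    by_cases hzw : ζ = w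
    · subst hzw
      simp [hh_def, sub_self, zero_pow (by omega : m ≠ 0)]
    · simp only [hh_def, if_neg hzw]
      rw [mul_div_cancel₀]
      exact pow_ne_zero _ (sub_ne_zero.2 hzw)
  have hh_ne : ∀ ζ ∈ stdAnnulus r, h ζ ≠ 0 := by
    intro ζ hζ
    by_cases hzw : ζ = w
    · subst hzw; simpa [hh_def] using hgw
    · simp only [hh_def, if_neg hzw]
      apply div_ne_zero
      · exact sub_ne_zero.2 fun heq => hzw (hinj hζ hw heq)
      · exact pow_ne_zero _ (sub_ne_zero.2 hzw)
  have hh_ev : h =ᶠ[𝓝 w] g := by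
    filter_upwards [hev] with ζ hζ
    by_cases hzw : ζ = w
    · subst hzw; simp [hh_def]
    · simp only [hh_def, if_neg hzw]
      rw [hζ, smul_eq_mul, mul_div_cancel_left₀]
      exact pow_ne_zero _ (sub_ne_zero.2 hzw)
  have hh_diff : DifferentiableOn ℂ h (stdAnnulus r) := by
    intro ζ hζ
    by_cases hzw : ζ = w
    · subst hzw
      exact (hg_an.differentiableAt.congr_of_eventuallyEq hh_ev).differentiableWithinAt
    · have hd : DifferentiableAt ℂ (fun ξ => (f ξ - f w) / (ξ - w)^m) ζ := by
        refine DifferentiableAt.div ?_ ?_ (pow_ne_zero _ (sub_ne_zero.2 hzw))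
        · exact (hholo.differentiableAt (hopen.mem_nhds hζ)).sub_const _
        · exact (differentiableAt_id.sub_const w).pow m
      have hev2 : h =ᶠ[𝓝 ζ] fun ξ => (f ξ - f w) / (ξ - w)^m := by
        filter_upwards [isOpen_compl_singleton.mem_nhds (by simpa using hzw : ζ ∈ ({w}ᶜ : Set ℂ))]
          with ξ hξ
        simp only [hh_def, if_neg (by simpa using hξ : ξ ≠ w)]
      exact (hd.congr_of_eventuallyEq hev2).differentiableWithinAt
  have hh_anal : AnalyticOnNhd ℂ h (stdAnnulus r) := hh_diff.analyticOnNhd hopen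
  have hdh_cont : ContinuousOn (deriv h) (stdAnnulus r) := hh_anal.deriv.continuousOn
  have hdc : ContinuousOn (deriv f) (stdAnnulus r) := hanal.deriv.continuousOn
  -- pointwise logarithmic derivative identity
  have hlog : ∀ ζ ∈ stdAnnulus r, ζ ≠ w →
      deriv f ζ / (f ζ - f w) = (m:ℂ) * (ζ - w)⁻¹ + deriv h ζ / h ζ := by
    intro ζ hζ hzw
    have hpow : HasDerivAt (fun ζ : ℂ => (ζ - w)^m) ((m:ℂ) * (ζ-w)^(m-1)) ζ := by
      have := ((hasDerivAt_id ζ).sub_const w).pow m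
      exact (by simpa using this : HasDerivAt ((fun x => x - w) ^ m) ((m:ℂ) * (ζ-w)^(m-1)) ζ)
    have hh' : HasDerivAt h (deriv h ζ) ζ :=
      (hh_diff.differentiableAt (hopen.mem_nhds hζ)).hasDerivAt
    have hu : HasDerivAt (fun ξ => (ξ - w)^m * h ξ + f w)
        ((m:ℂ) * (ζ-w)^(m-1) * h ζ + (ζ-w)^m * deriv h ζ) ζ := by
      exact (hpow.mul hh').add_const (f w)
    have hfu : deriv f ζ = (m:ℂ) * (ζ-w)^(m-1) * h ζ + (ζ-w)^m * deriv h ζ := by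
      have hloc : (fun ξ => (ξ - w)^m * h ξ + f w) =ᶠ[𝓝 ζ] f := by
        filter_upwards [hopen.mem_nhds hζ] with ξ hξ
        rw [← hglobal ξ hξ]; ring
      rw [← hloc.deriv_eq]
      exact hu.deriv
    rw [hfu, hglobal ζ hζ]
    obtain ⟨k, rfl⟩ : ∃ k, m = k + 1 := ⟨m - 1, (Nat.succ_pred_eq_of_pos hm1).symm⟩
    have hsubne : ζ - w ≠ 0 := sub_ne_zero.2 hzw
    have hhz : h ζ ≠ 0 := hh_ne ζ hζ
    simp only [Nat.add_sub_cancel]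
    field_simp
    ring
  -- integral split on a circle of radius ρ avoiding |w|
  have hsplit : ∀ ρ : ℝ, r < ρ → ρ < 1 → ρ ≠ ‖w‖ →
      (∮ ζ in C(0, ρ), deriv h ζ / h ζ)
        = wint f ρ (f w) - (m:ℂ) * (∮ ζ in C(0, ρ), (ζ - w)⁻¹) := by
    intro ρ hrρ hρ1' hρw
    have hρ0 : (0:ℝ) < ρ := lt_trans hr0 hrρ
    have hsph : sphere (0:ℂ) ρ ⊆ stdAnnulus r := sphere_subset_stdAnnulus hrρ hρ1'
    have hsphw : ∀ ζ ∈ sphere (0:ℂ) ρ, ζ ≠ w := by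
      intro ζ hζ heq
      rw [mem_sphere_zero_iff_norm] at hζ
      exact hρw (by rw [← hζ, heq])
    have hEq : EqOn (fun ζ => deriv h ζ / h ζ)
        (fun ζ => deriv f ζ / (f ζ - f w) - (m:ℂ) * (ζ - w)⁻¹) (sphere 0 ρ) := by
      intro ζ hζ
      have := hlog ζ (hsph hζ) (hsphw ζ hζ)
      simp only
      rw [this]; ring
    rw [circleIntegral.integral_congr hρ0.le hEq]
    have hint1 : CircleIntegrable (fun ζ => deriv f ζ / (f ζ - f w)) 0 ρ := by
      apply ContinuousOn.circleIntegrable hρ0.le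
      refine ((hdc.mono hsph).div ((hholo.continuousOn.mono hsph).sub continuousOn_const) ?_)
      intro ζ hζ
      exact sub_ne_zero.2 fun heq => (hsphw ζ hζ) (hinj (hsph hζ) hw heq)
    have hint2 : CircleIntegrable (fun ζ => (m:ℂ) * (ζ - w)⁻¹) 0 ρ := by
      apply ContinuousOn.circleIntegrable hρ0.le
      refine continuousOn_const.mul (ContinuousOn.inv₀ ((continuousOn_id.sub continuousOn_const)) ?_)
      intro ζ hζ
      exact sub_ne_zero.2 (hsphw ζ hζ)
    rw [circleIntegral.integral_sub hint1 hint2, wint]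
    congr 1
    have := circleIntegral.integral_smul (𝕜 := ℂ) (m:ℂ) (fun ζ => (ζ - w)⁻¹) 0 ρ
    simpa [smul_eq_mul] using this
  have houter : (∮ ζ in C(0, ρ₂), (ζ - w)⁻¹) = 2 * Real.pi * Complex.I := by
    apply circleIntegral.integral_sub_inv_of_mem_ball
    rw [mem_ball_zero_iff]
    exact hw2
  have hinner : (∮ ζ in C(0, ρ₁), (ζ - w)⁻¹) = 0 := by
    apply Complex.circleIntegral_eq_zero_of_differentiable_on_off_countable hρ₁0.le countable_empty
    · refine ContinuousOn.inv₀ ((continuous_sub_right w).continuousOn) ?_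
      intro ξ hξ
      rw [mem_closedBall_zero_iff] at hξ
      refine sub_ne_zero.2 fun heq => ?_
      rw [heq] at hξ
      linarith
    · intro ζ hζ
      have hζw : ζ ≠ w := by
        intro heq
        rw [mem_diff, mem_ball_zero_iff, heq] at hζ
        linarith [hζ.1]
      exact (differentiableAt_id.sub_const w).inv (sub_ne_zero.2 hζw)
  -- Cauchy for h'/h between the two radii
  have hmid : (∮ ζ in C(0, ρ₂), deriv h ζ / h ζ) = ∮ ζ in C(0, ρ₁), deriv h ζ / h ζ := by
    have hsub : closedBall (0:ℂ) ρ₂ \ ball (0:ℂ) ρ₁ ⊆ stdAnnulus r :=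
      closedAnn_subset_stdAnnulus h1 h2
    refine Complex.circleIntegral_eq_of_differentiable_on_annulus_off_countable hρ₁0
      (le_of_lt (lt_trans h1w hw2)) countable_empty ?_ ?_
    · exact (hdh_cont.mono hsub).div (hh_diff.continuousOn.mono hsub)
        (fun ζ hζ => hh_ne ζ (hsub hζ))
    · intro ζ hζ
      have hζ' : ζ ∈ closedBall (0:ℂ) ρ₂ \ ball (0:ℂ) ρ₁ := by
        obtain ⟨⟨hb, hcb⟩, -⟩ := hζ
        exact ⟨ball_subset_closedBall hb, fun hc => hcb (ball_subset_closedBall hc)⟩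
      have hζA : ζ ∈ stdAnnulus r := hsub hζ'
      refine DifferentiableAt.div ?_ ?_ (hh_ne ζ hζA)
      · exact (hh_anal.deriv ζ hζA).differentiableAt
      · exact hh_diff.differentiableAt (hopen.mem_nhds hζA)
  refine ⟨m, hm1, ?_⟩
  have e2 := hsplit ρ₂ (lt_trans h1 (lt_trans h1w hw2)) h2 (ne_of_gt hw2)
  have e1 := hsplit ρ₁ h1 (lt_trans (lt_trans h1w hw2) h2) (ne_of_lt h1w)
  rw [e1, e2, houter, hinner] at hmid
  linear_combination hmid

/-- Moving the reference point `f w` along `f` of a path staying on one side of the circle. -/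
lemma wint_point_move {r : ℝ} (hr0 : 0 < r) (hr1 : r < 1) {f : ℂ → ℂ}
    (hholo : DifferentiableOn ℂ f (stdAnnulus r)) (hinj : InjOn f (stdAnnulus r))
    {ρ : ℝ} (hρ1 : r < ρ) (hρ2 : ρ < 1) {w z : ℂ}
    (hwA : w ∈ stdAnnulus r) (hzA : z ∈ stdAnnulus r)
    (hside : (ρ < ‖w‖ ∧ ρ < ‖z‖) ∨
      (‖w‖ < ρ ∧ ‖z‖ < ρ)) :
    wint f ρ (f w) = wint f ρ (f z) := by
  have hρ0 : (0:ℝ) < ρ := lt_trans hr0 hρ1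
  have hmem : ∀ θ : ℝ, circleMap 0 ρ θ ∈ stdAnnulus r := fun θ =>
    sphere_subset_stdAnnulus hρ1 hρ2 (circleMap_mem_sphere 0 hρ0.le θ)
  set c : ℝ → ℝ := fun s => max 0 (min s 1) with hc_def
  set L : ℝ → ℝ := fun s => (1 - c s) * ‖w‖ + c s * ‖z‖ with hL_def
  set A : ℝ → ℝ := fun s => (1 - c s) * Complex.arg w + c s * Complex.arg z with hA_def
  set p : ℝ → ℂ := fun s => ((L s : ℝ) : ℂ) * Complex.exp (((A s : ℝ) : ℂ) * Complex.I)
    with hp_def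
  have hc01 : ∀ s : ℝ, 0 ≤ c s ∧ c s ≤ 1 := fun s =>
    ⟨le_max_left _ _, max_le (by norm_num) (min_le_right _ _)⟩
  have hLlb : ∀ s : ℝ, min (‖w‖) (‖z‖) ≤ L s := by
    intro s
    obtain ⟨h0, h1⟩ := hc01 s
    rw [hL_def]
    simp only
    nlinarith [min_le_left (‖w‖) (‖z‖),
      min_le_right (‖w‖) (‖z‖)]
  have hLub : ∀ s : ℝ, L s ≤ max (‖w‖) (‖z‖) := by
    intro s
    obtain ⟨h0, h1⟩ := hc01 s
    rw [hL_def]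
    simp only
    nlinarith [le_max_left (‖w‖) (‖z‖),
      le_max_right (‖w‖) (‖z‖)]
  have hminpos : r < min (‖w‖) (‖z‖) := lt_min hwA.1 hzA.1
  have hmax1 : max (‖w‖) (‖z‖) < 1 := max_lt hwA.2 hzA.2
  have habsp : ∀ s : ℝ, ‖p s‖ = L s := by
    intro s
    rw [hp_def]
    simp only [norm_mul, Complex.norm_exp, Complex.norm_real, Real.norm_eq_abs]
    have h1 : (((A s : ℝ) : ℂ) * Complex.I).re = 0 := by simp
    rw [h1, Real.exp_zero, mul_one]
    exact _root_.abs_of_nonneg (le_trans (le_trans hr0.le hminpos.le) (hLlb s))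
  have hpmem : ∀ s : ℝ, p s ∈ stdAnnulus r := by
    intro s
    constructor
    · rw [habsp s]; exact lt_of_lt_of_le hminpos (hLlb s)
    · rw [habsp s]; exact lt_of_le_of_lt (hLub s) hmax1
  have hp0 : p 0 = w := by
    have hc0 : c 0 = 0 := by rw [hc_def]; simp
    rw [hp_def]
    simp only [hL_def, hA_def, hc0]
    norm_num
  have hp1 : p 1 = z := by
    have hc1 : c 1 = 1 := by rw [hc_def]; simp
    rw [hp_def]
    simp only [hL_def, hA_def, hc1]
    norm_num
  have hpc : Continuous p := by
    have hcc : Continuous c := continuous_const.max (continuous_id.min continuous_const)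
    have hLc : Continuous L := ((continuous_const.sub hcc).mul continuous_const).add
      (hcc.mul continuous_const)
    have hAc : Continuous A := ((continuous_const.sub hcc).mul continuous_const).add
      (hcc.mul continuous_const)
    exact (Complex.continuous_ofReal.comp hLc).mul
      (((Complex.continuous_ofReal.comp hAc).mul continuous_const).cexp)
  have hne : ∀ s θ : ℝ, f (circleMap 0 ρ θ) ≠ f (p s) := by
    intro s θ heq
    have := hinj (hmem θ) (hpmem s) heq
    have habs : ρ = L s := by
      rw [← habsp s, ← this]
      simp [norm_circleMap_zero, _root_.abs_of_pos hρ0]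
    rcases hside with ⟨h1, h2⟩ | ⟨h1, h2⟩
    · have := hLlb s
      have := lt_min h1 h2
      linarith
    · have := hLub s
      have := max_lt h1 h2
      linarith
  have h := wint_transport hr0 hr1 hholo hρ1 hρ2
    (hholo.continuousOn.comp_continuous hpc hpmem) hne 0 1
  simp only [Function.comp_apply] at h
  rw [hp0, hp1] at h
  exact h

/-- `wint f ρ (f w)` is independent of the pair `(ρ, w)` provided `ρ < |w|`. -/
lemma wint_inner_const {r : ℝ} (hr0 : 0 < r) (hr1 : r < 1) {f : ℂ → ℂ}
    (hholo : DifferentiableOn ℂ f (stdAnnulus r)) (hinj : InjOn f (stdAnnulus r))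
    {ρ ρ' : ℝ} {w w' : ℂ} (hρ : r < ρ) (hw : ρ < ‖w‖)
    (hρ' : r < ρ') (hw' : ρ' < ‖w'‖)
    (hwA : w ∈ stdAnnulus r) (hwA' : w' ∈ stdAnnulus r) :
    wint f ρ (f w) = wint f ρ' (f w') := by
  set ρm : ℝ := (r + min ρ ρ') / 2 with hρm_def
  have hρm1 : r < ρm := by
    rw [hρm_def]
    have : r < min ρ ρ' := lt_min hρ hρ'
    linarith
  have hρmlt : ρm < min ρ ρ' := by
    rw [hρm_def]
    have : r < min ρ ρ' := lt_min hρ hρ'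
    linarith
  have hρ2 : ρ < 1 := lt_trans hw hwA.2
  have hρ2' : ρ' < 1 := lt_trans hw' hwA'.2
  have hρm2 : ρm < 1 := lt_trans (lt_of_lt_of_le hρmlt (min_le_left _ _)) hρ2
  have hkey : ∀ (σ : ℝ), ρm ≤ σ → σ < 1 → ∀ (u : ℂ), u ∈ stdAnnulus r →
      σ < ‖u‖ → wint f σ (f u) = wint f ρm (f u) := by
    intro σ hσ1 hσ2 u huA hσu
    refine wint_radius hr0 hr1 hholo hρm1 hσ1 hσ2 ?_
    intro ζ hζ heq
    have hζA : ζ ∈ stdAnnulus r := closedAnn_subset_stdAnnulus hρm1 hσ2 hζ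
    have he2 := hinj hζA huA heq
    rw [mem_diff, mem_closedBall_zero_iff] at hζ
    rw [he2] at hζ
    linarith [hζ.1]
  have e1 : wint f ρ (f w) = wint f ρm (f w) :=
    hkey ρ (le_of_lt (lt_of_lt_of_le hρmlt (min_le_left _ _))) hρ2 w hwA hw
  have e3 : wint f ρ' (f w') = wint f ρm (f w') :=
    hkey ρ' (le_of_lt (lt_of_lt_of_le hρmlt (min_le_right _ _))) hρ2' w' hwA' hw'
  have e2 : wint f ρm (f w) = wint f ρm (f w') := by
    refine wint_point_move hr0 hr1 hholo hinj hρm1 hρm2 hwA hwA' (Or.inl ⟨?_, ?_⟩)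
    · exact lt_trans (lt_of_lt_of_le hρmlt (min_le_left _ _)) hw
    · exact lt_trans (lt_of_lt_of_le hρmlt (min_le_right _ _)) hw'
  rw [e1, e2, ← e3]

/-- `wint f ρ (f w)` is independent of the pair `(ρ, w)` provided `|w| < ρ`. -/
lemma wint_outer_const {r : ℝ} (hr0 : 0 < r) (hr1 : r < 1) {f : ℂ → ℂ}
    (hholo : DifferentiableOn ℂ f (stdAnnulus r)) (hinj : InjOn f (stdAnnulus r))
    {ρ ρ' : ℝ} {w w' : ℂ} (hw : ‖w‖ < ρ) (hρ : ρ < 1)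
    (hw' : ‖w'‖ < ρ') (hρ' : ρ' < 1)
    (hwA : w ∈ stdAnnulus r) (hwA' : w' ∈ stdAnnulus r) :
    wint f ρ (f w) = wint f ρ' (f w') := by
  set ρM : ℝ := (max ρ ρ' + 1) / 2 with hρM_def
  have hmax1 : max ρ ρ' < 1 := max_lt hρ hρ'
  have hρMgt : max ρ ρ' < ρM := by rw [hρM_def]; linarith
  have hρM2 : ρM < 1 := by rw [hρM_def]; linarith
  have hρM1 : r < ρM := by
    have : r < ρ := lt_trans hwA.1 hw
    have : r < max ρ ρ' := lt_of_lt_of_le this (le_max_left _ _)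
    linarith
  have hkey : ∀ (σ : ℝ), r < σ → σ ≤ ρM → ∀ (u : ℂ), u ∈ stdAnnulus r →
      ‖u‖ < σ → wint f ρM (f u) = wint f σ (f u) := by
    intro σ hσ1 hσ2 u huA hσu
    refine wint_radius hr0 hr1 hholo hσ1 hσ2 hρM2 ?_
    intro ζ hζ heq
    have hζA : ζ ∈ stdAnnulus r := closedAnn_subset_stdAnnulus hσ1 hρM2 hζ
    have he2 := hinj hζA huA heq
    rw [mem_diff, mem_ball_zero_iff] at hζ
    push_neg at hζ
    rw [he2] at hζ
    linarith [hζ.2]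
  have hρr : r < ρ := lt_trans hwA.1 hw
  have hρr' : r < ρ' := lt_trans hwA'.1 hw'
  have e1 : wint f ρM (f w) = wint f ρ (f w) :=
    hkey ρ hρr (le_of_lt (lt_of_le_of_lt (le_max_left _ _) hρMgt)) w hwA hw
  have e3 : wint f ρM (f w') = wint f ρ' (f w') :=
    hkey ρ' hρr' (le_of_lt (lt_of_le_of_lt (le_max_right _ _) hρMgt)) w' hwA' hw'
  have e2 : wint f ρM (f w) = wint f ρM (f w') := by
    refine wint_point_move hr0 hr1 hholo hinj hρM1 hρM2 hwA hwA' (Or.inr ⟨?_, ?_⟩)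
    · exact lt_trans hw (lt_of_le_of_lt (le_max_left _ _) hρMgt)
    · exact lt_trans hw' (lt_of_le_of_lt (le_max_right _ _) hρMgt)
  rw [← e1, e2, e3]

/-- An interior maximum of `|f|` on the annulus contradicts injectivity. -/
lemma no_interior_max {r : ℝ} (hr0 : 0 < r) (hr1 : r < 1) {f : ℂ → ℂ}
    (hholo : DifferentiableOn ℂ f (stdAnnulus r)) (hinj : InjOn f (stdAnnulus r))
    {ζ₀ : ℂ} (hζ₀ : ζ₀ ∈ stdAnnulus r)
    (hmax : ∀ ζ ∈ stdAnnulus r, ‖f ζ‖ ≤ ‖f ζ₀‖) : False := by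
  have hopen := isOpen_stdAnnulus r
  have hpre : IsPreconnected (stdAnnulus r) := isPreconnected_annulus hr0.le
  have hmax' : IsMaxOn (norm ∘ f) (stdAnnulus r) ζ₀ := by
    intro ζ hζ
    simp only [Function.comp_apply]
    exact hmax ζ hζ
  have heq := Complex.eqOn_of_isPreconnected_of_isMaxOn_norm hpre hopen hholo hζ₀ hmax'
  set p₁ : ℂ := (((r+1)/2 : ℝ) : ℂ) with hp₁_def
  set p₂ : ℂ := -(((r+1)/2 : ℝ) : ℂ) with hp₂_def
  have habs : ‖p₁‖ = (r+1)/2 ∧ ‖p₂‖ = (r+1)/2 := by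
    constructor
    · rw [hp₁_def, Complex.norm_real, Real.norm_eq_abs]; exact _root_.abs_of_pos (by linarith)
    · rw [hp₂_def, norm_neg, Complex.norm_real, Real.norm_eq_abs]
      exact _root_.abs_of_pos (by linarith)
  have hmem₁ : p₁ ∈ stdAnnulus r := ⟨by rw [habs.1]; linarith, by rw [habs.1]; linarith⟩
  have hmem₂ : p₂ ∈ stdAnnulus r := ⟨by rw [habs.2]; linarith, by rw [habs.2]; linarith⟩
  have h1 := heq hmem₁
  have h2 := heq hmem₂
  have : p₁ = p₂ := hinj hmem₁ hmem₂ (h1.trans h2.symm)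
  rw [hp₁_def, hp₂_def] at this
  have hr2 : ((r+1)/2 : ℝ) ≠ 0 := by positivity
  have : ((((r+1)/2 : ℝ)) : ℂ) = 0 := by linear_combination (this : _) / 2
  exact hr2 (by exact_mod_cast this)

/-- Lemma 4.1: if an injective holomorphic `f : 𝔸_r → ℂ*` preserves winding
numbers, then for `r < R < |z| < 1`, the point `f z` lies in the exterior of
the Jordan curve `f(C(0,R))`. -/
theorem image_in_exterior_of_circle_image
    (r : ℝ) (hr0 : 0 < r) (hr1 : r < 1) (f : ℂ → ℂ)
    (hholo : DifferentiableOn ℂ f (stdAnnulus r)) (hinj : InjOn f (stdAnnulus r))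
    (hmaps : MapsTo f (stdAnnulus r) punctPlane)
    (hwind : PreservesWinding f (stdAnnulus r))
    (R : ℝ) (z : ℂ) (hrR : r < R) (hRz : R < ‖z‖)
    (hz1 : ‖z‖ < 1) :
    HasWindingNumber
      (fun t : ℝ => f ((R : ℂ) * Complex.exp (2 * Real.pi * Complex.I * t)))
      (f z) 0 := by
  have hzA : z ∈ stdAnnulus r := ⟨lt_trans hrR hRz, hz1⟩
  have hR2 : R < 1 := lt_trans hRz hz1
  have hR0 : (0:ℝ) < R := lt_trans hr0 hrR
  have habs_sph : ∀ {s : ℝ} (w : ℂ), w ∈ sphere (0:ℂ) s → ‖w‖ = s := by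
    intro s w hw
    rw [mem_sphere_zero_iff_norm] at hw
    exact hw
  have hqR : ∀ θ : ℝ, f (circleMap 0 R θ) ≠ f z := by
    intro θ heq
    have hmemθ : circleMap 0 R θ ∈ stdAnnulus r :=
      sphere_subset_stdAnnulus hrR hR2 (circleMap_mem_sphere 0 hR0.le θ)
    have h2 := hinj hmemθ hzA heq
    have h3 : ‖circleMap 0 R θ‖ = R := by
      simp [norm_circleMap_zero, _root_.abs_of_pos hR0]
    rw [h2] at h3
    rw [h3] at hRz
    exact lt_irrefl _ hRz
  refine (wind_iff hr0 hr1 hholo hrR hR2 hqR 0).mpr ?_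
  push_cast
  rw [mul_zero]
  -- main claim : wint f R (f z) = 0
  by_contra hv
  -- the outer comparison radius
  set ρZ : ℝ := (‖z‖ + 1) / 2 with hρZ_def
  have hzρZ : ‖z‖ < ρZ := by rw [hρZ_def]; linarith
  have hρZ1 : ρZ < 1 := by rw [hρZ_def]; linarith
  have hρZr : r < ρZ := lt_trans hzA.1 hzρZ
  -- extrema on circles
  have hMax : ∀ s : ℝ, r < s → s < 1 → ∃ ζ, ζ ∈ sphere (0:ℂ) s ∧
      ∀ ξ ∈ sphere (0:ℂ) s, ‖f ξ‖ ≤ ‖f ζ‖ := by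
    intro s hs1 hs2
    have hs0 : (0:ℝ) < s := lt_trans hr0 hs1
    have hnes : (sphere (0:ℂ) s).Nonempty := by
      refine ⟨(s:ℂ), ?_⟩
      simp [mem_sphere_zero_iff_norm, Complex.norm_real, Real.norm_eq_abs,
        _root_.abs_of_pos hs0]
    obtain ⟨ζ, hζ, hmax⟩ := (isCompact_sphere (0:ℂ) s).exists_isMaxOn hnes
      (continuous_norm.comp_continuousOn
        (hholo.continuousOn.mono (sphere_subset_stdAnnulus hs1 hs2)))
    exact ⟨ζ, hζ, fun ξ hξ => hmax hξ⟩
  have hMin : ∀ s : ℝ, r < s → s < 1 → ∃ ζ, ζ ∈ sphere (0:ℂ) s ∧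
      ∀ ξ ∈ sphere (0:ℂ) s, ‖f ζ‖ ≤ ‖f ξ‖ := by
    intro s hs1 hs2
    have hs0 : (0:ℝ) < s := lt_trans hr0 hs1
    have hnes : (sphere (0:ℂ) s).Nonempty := by
      refine ⟨(s:ℂ), ?_⟩
      simp [mem_sphere_zero_iff_norm, Complex.norm_real, Real.norm_eq_abs,
        _root_.abs_of_pos hs0]
    obtain ⟨ζ, hζ, hmin⟩ := (isCompact_sphere (0:ℂ) s).exists_isMinOn hnes
      (continuous_norm.comp_continuousOn
        (hholo.continuousOn.mono (sphere_subset_stdAnnulus hs1 hs2)))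
    exact ⟨ζ, hζ, fun ξ hξ => hmin hξ⟩
  -- Step 1 : u = 0
  have hu0 : wint f ρZ (f z) = 0 := by
    by_cases hB : ∃ s1 s2 : ℝ, ∃ w1 : ℂ, r < s1 ∧ s1 < s2 ∧ s2 < 1 ∧ w1 ∈ sphere (0:ℂ) s1 ∧
        ∀ θ : ℝ, ‖f (circleMap 0 s2 θ)‖ < ‖f w1‖
    · obtain ⟨s1, s2, w1, hs1, hs12, hs2, hw1, hdom⟩ := hB
      have hw1A : w1 ∈ stdAnnulus r :=
        sphere_subset_stdAnnulus hs1 (lt_trans hs12 hs2) hw1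
      have h1 : wint f s2 (f w1) = 0 :=
        wint_zero_of_gt hr0 hr1 hholo (lt_trans hs1 hs12) hs2 hdom
      have h2 : wint f ρZ (f z) = wint f s2 (f w1) := by
        refine wint_outer_const hr0 hr1 hholo hinj hzρZ hρZ1 ?_ hs2 hzA hw1A
        rw [habs_sph w1 hw1]; exact hs12
      rw [h2, h1]
    · exfalso
      by_cases hAw : ∃ s1 s2 : ℝ, ∃ w2 : ℂ, r < s1 ∧ s1 < s2 ∧ s2 < 1 ∧
          w2 ∈ sphere (0:ℂ) s2 ∧
          ∀ θ : ℝ, ‖f (circleMap 0 s1 θ)‖ < ‖f w2‖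
      · obtain ⟨s1, s2, w2, hs1, hs12, hs2, hw2, hdom⟩ := hAw
        have hw2A : w2 ∈ stdAnnulus r := sphere_subset_stdAnnulus (lt_trans hs1 hs12) hs2 hw2
        have h1 : wint f s1 (f w2) = 0 :=
          wint_zero_of_gt hr0 hr1 hholo hs1 (lt_trans hs12 hs2) hdom
        have h2 : wint f R (f z) = wint f s1 (f w2) := by
          refine wint_inner_const hr0 hr1 hholo hinj hrR hRz hs1 ?_ hzA hw2A
          rw [habs_sph w2 hw2]; exact hs12
        exact hv (h2.trans h1)
      · push_neg at hB hAw
        set ρb : ℝ := (r + 1) / 2 with hρb_def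
        have hρb1 : r < ρb := by rw [hρb_def]; linarith
        have hρb2 : ρb < 1 := by rw [hρb_def]; linarith
        obtain ⟨wb, hwb, hwbmax⟩ := hMax ρb hρb1 hρb2
        refine no_interior_max hr0 hr1 hholo hinj
          (sphere_subset_stdAnnulus hρb1 hρb2 hwb) ?_
        intro ζ hζ
        have hζs : ζ ∈ sphere (0:ℂ) (‖ζ‖) := by
          simp [mem_sphere_zero_iff_norm]
        rcases lt_trichotomy (‖ζ‖) ρb with hlt | heqs | hgt
        · obtain ⟨ws, hws, hwsmax⟩ := hMax (‖ζ‖) hζ.1 hζ.2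
          obtain ⟨θ, hθ⟩ := hB (‖ζ‖) ρb ws hζ.1 hlt hρb2 hws
          have hcmem : circleMap 0 ρb θ ∈ sphere (0:ℂ) ρb :=
            circleMap_mem_sphere 0 (by linarith : (0:ℝ) ≤ ρb) θ
          calc ‖f ζ‖ ≤ ‖f ws‖ := hwsmax ζ hζs
          _ ≤ ‖f (circleMap 0 ρb θ)‖ := hθ
          _ ≤ ‖f wb‖ := hwbmax _ hcmem
        · rw [heqs] at hζs
          exact hwbmax ζ hζs
        · obtain ⟨ws, hws, hwsmax⟩ := hMax (‖ζ‖) hζ.1 hζ.2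
          obtain ⟨θ, hθ⟩ := hAw ρb (‖ζ‖) ws hρb1 hgt hζ.2 hws
          have hcmem : circleMap 0 ρb θ ∈ sphere (0:ℂ) ρb :=
            circleMap_mem_sphere 0 (by linarith : (0:ℝ) ≤ ρb) θ
          calc ‖f ζ‖ ≤ ‖f ws‖ := hwsmax ζ hζs
          _ ≤ ‖f (circleMap 0 ρb θ)‖ := hθ
          _ ≤ ‖f wb‖ := hwbmax _ hcmem
  -- Step 2 : v = 2πi
  have h2pine : (2 * (Real.pi:ℂ) * Complex.I : ℂ) ≠ 0 := by
    simp [Real.pi_ne_zero, Complex.I_ne_zero, Complex.ext_iff]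
  have hfz_ne : ∀ ζ ∈ stdAnnulus r, f ζ ≠ 0 := fun ζ hζ => hmaps hζ
  have hvval : wint f R (f z) = 2 * Real.pi * Complex.I := by
    by_cases hB' : ∃ s1 s2 : ℝ, ∃ w1 : ℂ, r < s1 ∧ s1 < s2 ∧ s2 < 1 ∧
        w1 ∈ sphere (0:ℂ) s1 ∧
        ∀ θ : ℝ, ‖f w1‖ < ‖f (circleMap 0 s2 θ)‖
    · exfalso
      obtain ⟨s1, s2, w1, hs1, hs12, hs2, hw1, hdom⟩ := hB'
      have hw1A : w1 ∈ stdAnnulus r :=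
        sphere_subset_stdAnnulus hs1 (lt_trans hs12 hs2) hw1
      have h1 : wint f s2 (f w1) = wint f s2 0 :=
        wint_eq_wint_zero_of_lt hr0 hr1 hholo (lt_trans hs1 hs12) hs2 hdom
      have h2 : wint f s2 0 = 2 * Real.pi * Complex.I :=
        wint_zero_val hr0 hr1 hholo hmaps hwind (lt_trans hs1 hs12) hs2
      have h3 : wint f ρZ (f z) = wint f s2 (f w1) := by
        refine wint_outer_const hr0 hr1 hholo hinj hzρZ hρZ1 ?_ hs2 hzA hw1A
        rw [habs_sph w1 hw1]; exact hs12
      rw [hu0] at h3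
      rw [h1, h2] at h3
      exact h2pine h3.symm
    · by_cases hA' : ∃ s1 s2 : ℝ, ∃ w2 : ℂ, r < s1 ∧ s1 < s2 ∧ s2 < 1 ∧
          w2 ∈ sphere (0:ℂ) s2 ∧
          ∀ θ : ℝ, ‖f w2‖ < ‖f (circleMap 0 s1 θ)‖
      · obtain ⟨s1, s2, w2, hs1, hs12, hs2, hw2, hdom⟩ := hA'
        have hw2A : w2 ∈ stdAnnulus r := sphere_subset_stdAnnulus (lt_trans hs1 hs12) hs2 hw2
        have h1 : wint f s1 (f w2) = wint f s1 0 :=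
          wint_eq_wint_zero_of_lt hr0 hr1 hholo hs1 (lt_trans hs12 hs2) hdom
        have h2 : wint f s1 0 = 2 * Real.pi * Complex.I :=
          wint_zero_val hr0 hr1 hholo hmaps hwind hs1 (lt_trans hs12 hs2)
        have h3 : wint f R (f z) = wint f s1 (f w2) := by
          refine wint_inner_const hr0 hr1 hholo hinj hrR hRz hs1 ?_ hzA hw2A
          rw [habs_sph w2 hw2]; exact hs12
        rw [h3, h1, h2]
      · exfalso
        push_neg at hB' hA'
        set fi : ℂ → ℂ := fun ζ => (f ζ)⁻¹ with hfi_def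
        have hfid : DifferentiableOn ℂ fi (stdAnnulus r) := by
          exact DifferentiableOn.inv hholo hfz_ne
        have hfiinj : InjOn fi (stdAnnulus r) := by
          intro a ha b hb h
          exact hinj ha hb (inv_injective h)
        set ρb : ℝ := (r + 1) / 2 with hρb_def
        have hρb1 : r < ρb := by rw [hρb_def]; linarith
        have hρb2 : ρb < 1 := by rw [hρb_def]; linarith
        obtain ⟨xb, hxb, hxbmin⟩ := hMin ρb hρb1 hρb2
        refine no_interior_max hr0 hr1 hfid hfiinj
          (sphere_subset_stdAnnulus hρb1 hρb2 hxb) ?_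
        intro ζ hζ
        have hζs : ζ ∈ sphere (0:ℂ) (‖ζ‖) := by
          simp [mem_sphere_zero_iff_norm]
        have hkey : ‖f xb‖ ≤ ‖f ζ‖ := by
          rcases lt_trichotomy (‖ζ‖) ρb with hlt | heqs | hgt
          · obtain ⟨xs, hxs, hxsmin⟩ := hMin (‖ζ‖) hζ.1 hζ.2
            obtain ⟨θ, hθ⟩ := hB' (‖ζ‖) ρb xs hζ.1 hlt hρb2 hxs
            have hcmem : circleMap 0 ρb θ ∈ sphere (0:ℂ) ρb :=
              circleMap_mem_sphere 0 (by linarith : (0:ℝ) ≤ ρb) θ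
            calc ‖f xb‖ ≤ ‖f (circleMap 0 ρb θ)‖ := hxbmin _ hcmem
            _ ≤ ‖f xs‖ := hθ
            _ ≤ ‖f ζ‖ := hxsmin ζ hζs
          · rw [heqs] at hζs
            exact hxbmin ζ hζs
          · obtain ⟨xs, hxs, hxsmin⟩ := hMin (‖ζ‖) hζ.1 hζ.2
            obtain ⟨θ, hθ⟩ := hA' ρb (‖ζ‖) xs hρb1 hgt hζ.2 hxs
            have hcmem : circleMap 0 ρb θ ∈ sphere (0:ℂ) ρb :=
              circleMap_mem_sphere 0 (by linarith : (0:ℝ) ≤ ρb) θ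
            calc ‖f xb‖ ≤ ‖f (circleMap 0 ρb θ)‖ := hxbmin _ hcmem
            _ ≤ ‖f xs‖ := hθ
            _ ≤ ‖f ζ‖ := hxsmin ζ hζs
        have hpos : 0 < ‖f xb‖ := by
          have := hfz_ne xb (sphere_subset_stdAnnulus hρb1 hρb2 hxb)
          exact norm_pos_iff.mpr this
        rw [hfi_def]
        simp only [norm_inv]
        exact inv_anti₀ hpos hkey
  -- Step 3 : crossing gives the contradiction
  obtain ⟨m, hm1, hcross⟩ := wint_crossing hr0 hr1 hholo hinj hzA hrR hRz hzρZ hρZ1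
  rw [hu0, hvval] at hcross
  have hm0 : ((m:ℂ) + 1) = 0 := by
    have h4 : (2 * (Real.pi:ℂ) * Complex.I) * ((m:ℂ) + 1) = 0 := by
      linear_combination -hcross
    rcases mul_eq_zero.mp h4 with h | h
    · exact absurd h h2pine
    · exact h
  have hm2 : ((m + 1 : ℕ) : ℂ) = 0 := by push_cast; linear_combination hm0
  have hm3 : m + 1 = 0 := by exact_mod_cast hm2
  omega
end
end

section
/- Let (D_t) = (𝔸_{r(t)}) be a canonical domain system of order d ∈ [1,+∞] and (φ_{s,t}) an evolution family of order d over (D_t). Then for every s ≥ 0 and every sequence (t_n) ⊂ [s,∞), the sequence ψ_n := φ_{s,t_n} has a subsequence converging uniformly on compact subsets of D_s either to a constant or to an injective holomorphic function ψ : D_s → 𝔻* satisfying I(ψ∘γ) = I(γ) for every closed curve γ ⊂ D_s. -/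
open MeasureTheory Set Filter Metric
open scoped ENNReal NNReal Topology

noncomputable section

namespace EFAux

section Chunk1


lemma isOpen_stdAnnulus (r : ℝ) : IsOpen (stdAnnulus r) := by
  have : stdAnnulus r = (fun z : ℂ => ‖z‖) ⁻¹' (Ioo r 1) := by
    ext z; simp [stdAnnulus, mem_Ioo]
  rw [this]
  exact isOpen_Ioo.preimage continuous_norm

lemma stdAnnulus_mono {r r' : ℝ} (h : r' ≤ r) : stdAnnulus r ⊆ stdAnnulus r' :=
  fun _ hz => ⟨lt_of_le_of_lt h hz.1, hz.2⟩

lemma ne_zero_of_mem_stdAnnulus {r : ℝ} (hr : 0 ≤ r) {z : ℂ} (hz : z ∈ stdAnnulus r) :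
    z ≠ 0 := by
  intro h
  have h1 := hz.1
  rw [h] at h1
  simp only [norm_zero] at h1
  exact absurd (hr.trans_lt h1) (lt_irrefl 0)

lemma norm_le_one_of_mem_stdAnnulus {r : ℝ} {z : ℂ} (hz : z ∈ stdAnnulus r) : ‖z‖ ≤ 1 := by
  exact hz.2.le

lemma stdAnnulus_nonempty {r : ℝ} (hr0 : 0 ≤ r) (hr1 : r < 1) :
    (stdAnnulus r).Nonempty := by
  refine ⟨(((1 + r) / 2 : ℝ) : ℂ), ?_, ?_⟩ <;>
    rw [Complex.norm_real, Real.norm_eq_abs, abs_of_nonneg (by linarith)] <;> linarith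

lemma isPreconnected_stdAnnulus {r : ℝ} (hr0 : 0 ≤ r) :
    IsPreconnected (stdAnnulus r) := by
  have himg : stdAnnulus r =
      (fun p : ℝ × ℝ => (p.1 : ℂ) * Complex.exp ((p.2 : ℂ) * Complex.I)) ''
        (Ioo r 1 ×ˢ (univ : Set ℝ)) := by
    ext z
    constructor
    · intro hz
      exact ⟨(‖z‖, Complex.arg z), ⟨⟨hz.1, hz.2⟩, trivial⟩,
        Complex.norm_mul_exp_arg_mul_I z⟩
    · rintro ⟨⟨x, θ⟩, ⟨hx, -⟩, rfl⟩
      have hx0 : (0:ℝ) ≤ x := hr0.trans hx.1.le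
      have habs : ‖((x : ℂ) * Complex.exp ((θ : ℂ) * Complex.I))‖ = x := by
        rw [norm_mul, Complex.norm_exp_ofReal_mul_I, mul_one, Complex.norm_real, Real.norm_eq_abs,
          abs_of_nonneg hx0]
      exact ⟨by rw [habs]; exact hx.1, by rw [habs]; exact hx.2⟩
  rw [himg]
  refine (isPreconnected_Ioo.prod isPreconnected_univ).image _ ?_
  exact ((Complex.continuous_ofReal.comp continuous_fst).mul
    (Complex.continuous_exp.comp
      ((Complex.continuous_ofReal.comp continuous_snd).mul continuous_const))).continuousOn

/-- Schwarz-type Lipschitz estimate for bounded holomorphic functions. -/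
lemma schwarz_lip {f : ℂ → ℂ} {c z : ℂ} {R M : ℝ} (hR : 0 < R)
    (hf : DifferentiableOn ℂ f (ball c R))
    (hb : ∀ w ∈ ball c R, ‖f w‖ ≤ M)
    (hz : z ∈ ball c R) : dist (f z) (f c) ≤ 2 * M / R * dist z c := by
  have key : ∀ ε : ℝ, 0 < ε → dist (f z) (f c) ≤ (2 * M + ε) / R * dist z c := by
    intro ε hε
    refine Complex.dist_le_div_mul_dist_of_mapsTo_ball hf ?_ hz
    intro w hw
    rw [mem_closedBall]
    apply le_of_lt
    calc dist (f w) (f c) ≤ ‖f w‖ + ‖f c‖ := dist_le_norm_add_norm _ _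
      _ ≤ M + M := add_le_add (hb w hw) (hb c (mem_ball_self hR))
      _ < 2 * M + ε := by linarith
  rcases eq_or_lt_of_le (dist_nonneg : 0 ≤ dist z c) with hd | hd
  · rw [← hd, mul_zero]
    have hzc : z = c := by rwa [eq_comm, dist_eq_zero] at hd
    rw [hzc, dist_self]
  · refine le_of_forall_pos_le_add fun ε hε => ?_
    have h1 := key (ε * R / dist z c) (by positivity)
    calc dist (f z) (f c) ≤ (2 * M + ε * R / dist z c) / R * dist z c := h1
      _ = 2 * M / R * dist z c + ε := by field_simp

lemma schwarz_pair {f : ℂ → ℂ} {c z w : ℂ} {R M : ℝ} (hR : 0 < R)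
    (hf : DifferentiableOn ℂ f (ball c R))
    (hb : ∀ x ∈ ball c R, ‖f x‖ ≤ M)
    (hz : z ∈ ball c (R / 4)) (hw : w ∈ ball c (R / 4)) :
    dist (f z) (f w) ≤ 4 * M / R * dist z w := by
  have hsub : ball w (R / 2) ⊆ ball c R := by
    intro x hx
    rw [mem_ball] at hx hw ⊢
    calc dist x c ≤ dist x w + dist w c := dist_triangle _ _ _
      _ < R / 2 + R / 4 := by linarith
      _ ≤ R := by linarith
  have hzw : z ∈ ball w (R / 2) := by
    rw [mem_ball] at hz hw ⊢
    calc dist z w ≤ dist z c + dist c w := dist_triangle _ _ _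
      _ < R / 4 + R / 4 := by rw [dist_comm c w]; linarith
      _ = R / 2 := by ring
  have := schwarz_lip (by positivity : (0:ℝ) < R / 2) (hf.mono hsub)
    (fun x hx => hb x (hsub hx)) hzw
  calc dist (f z) (f w) ≤ 2 * M / (R / 2) * dist z w := this
    _ = 4 * M / R * dist z w := by ring_nf

/-- A compact subset of an open set has a uniform ball margin. -/
lemma compact_margin {K U : Set ℂ} (hK : IsCompact K) (hU : IsOpen U) (hKU : K ⊆ U) :
    ∃ R > 0, ∀ z ∈ K, ball z R ⊆ U := by
  rcases K.eq_empty_or_nonempty with rfl | hne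
  · exact ⟨1, one_pos, by simp⟩
  rcases eq_empty_or_nonempty Uᶜ with hUc | hUc
  · refine ⟨1, one_pos, fun z _ x _ => ?_⟩
    by_contra hx
    exact absurd (mem_compl hx) (by rw [hUc]; exact notMem_empty x)
  obtain ⟨z0, hz0K, hz0min⟩ := hK.exists_isMinOn hne
    ((continuous_infDist_pt (Uᶜ)).continuousOn)
  have hpos : 0 < infDist z0 Uᶜ := by
    rw [← (isClosed_compl_iff.mpr hU).notMem_iff_infDist_pos hUc]
    exact fun h => h (hKU hz0K)
  refine ⟨infDist z0 Uᶜ, hpos, fun z hz x hx => ?_⟩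
  by_contra hxU
  have h1 : infDist z Uᶜ ≤ dist z x := infDist_le_dist_of_mem (mem_compl hxU)
  have h2 : infDist z0 Uᶜ ≤ infDist z Uᶜ := hz0min hz
  rw [mem_ball, dist_comm] at hx
  linarith

/-- Strict monotonicity of `omegaFun` on `[0,1)`. -/
lemma omegaFun_lt {a b : ℝ} (ha : 0 ≤ a) (hab : a < b) (hb : b < 1) :
    omegaFun a < omegaFun b := by
  have hb0 : 0 < b := ha.trans_lt hab
  have hlogb : Real.log b < 0 := Real.log_neg hb0 hb
  have hωb : omegaFun b = Real.pi / (-Real.log b) := by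
    rw [omegaFun, if_neg hb0.ne', neg_div, div_neg]
  rcases eq_or_lt_of_le ha with h | h
  · have : omegaFun a = 0 := by rw [omegaFun, if_pos h.symm]
    rw [this, hωb]
    exact div_pos Real.pi_pos (neg_pos.mpr hlogb)
  · have ha0 : a ≠ 0 := h.ne'
    have hloga : Real.log a < 0 := Real.log_neg h (hab.trans hb)
    have hωa : omegaFun a = Real.pi / (-Real.log a) := by
      rw [omegaFun, if_neg ha0, neg_div, div_neg]
    rw [hωa, hωb]
    apply div_lt_div_of_pos_left Real.pi_pos (neg_pos.mpr hlogb)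
    have := Real.log_lt_log h hab
    linarith

lemma omegaFun_nonneg {a : ℝ} (ha : 0 ≤ a) (ha1 : a < 1) : 0 ≤ omegaFun a := by
  rcases eq_or_lt_of_le ha with h | h
  · rw [omegaFun, if_pos h.symm]
  · have := omegaFun_lt le_rfl h ha1
    rw [omegaFun, if_pos rfl] at this
    exact this.le

lemma omegaFun_mono {a b : ℝ} (ha : 0 ≤ a) (hab : a ≤ b) (hb : b < 1) :
    omegaFun a ≤ omegaFun b := by
  rcases eq_or_lt_of_le hab with h | h
  · rw [h]
  · exact (omegaFun_lt ha h hb).le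


end Chunk1

section Chunk2


lemma k_integrableOn {d : ℝ≥0∞} (hd : 1 ≤ d) {k : ℝ → ℝ} {S T : ℝ}
    (hk : MemLp k d (volume.restrict (Icc S T))) : IntegrableOn k (Icc S T) := by
  haveI : IsFiniteMeasure (volume.restrict (Icc S T)) :=
    ⟨by rw [Measure.restrict_apply_univ]; exact measure_Icc_lt_top⟩
  exact memLp_one_iff_integrable.mp (hk.mono_exponent hd)

/-- ε-δ smallness of integrals of an integrable function near a point. -/
lemma integral_small {k : ℝ → ℝ} {S T : ℝ} (hST : S ≤ T)
    (hk : IntegrableOn k (Icc S T)) {c : ℝ} (hc : c ∈ Icc S T) {ε : ℝ} (hε : 0 < ε) :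
    ∃ ρ > 0, ∀ u v : ℝ, u ∈ Icc S T → v ∈ Icc S T → u ≤ v →
      |u - c| < ρ → |v - c| < ρ → ∫ ξ in u..v, k ξ ≤ ε := by
  have hcont : ContinuousOn (fun x => ∫ t in Ioc S x, k t) (Icc S T) :=
    intervalIntegral.continuousOn_primitive hk
  have hcw := hcont c hc
  rw [Metric.continuousWithinAt_iff] at hcw
  obtain ⟨ρ, hρ, hball⟩ := hcw (ε / 2) (by linarith)
  refine ⟨ρ, hρ, fun u v hu hv huv hunear hvnear => ?_⟩
  have hIIu : IntervalIntegrable k volume S u := by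
    refine (hk.mono_set ?_).intervalIntegrable
    rw [uIcc_of_le hu.1]; exact Icc_subset_Icc le_rfl hu.2
  have hIIuv : IntervalIntegrable k volume u v := by
    refine (hk.mono_set ?_).intervalIntegrable
    rw [uIcc_of_le huv]; exact Icc_subset_Icc hu.1 hv.2
  have hadd := intervalIntegral.integral_add_adjacent_intervals hIIu hIIuv
  have hprim : ∀ x : ℝ, x ∈ Icc S T → (∫ t in S..x, k t) = ∫ t in Ioc S x, k t := by
    intro x hx; rw [intervalIntegral.integral_of_le hx.1]
  have h1 : (∫ ξ in u..v, k ξ) = (∫ t in Ioc S v, k t) - ∫ t in Ioc S u, k t := by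
    rw [← hprim v hv, ← hprim u hu, ← hadd]; ring
  have h2 := hball hu (by rwa [Real.dist_eq])
  have h3 := hball hv (by rwa [Real.dist_eq])
  rw [Real.dist_eq] at h2 h3
  have h2' := abs_lt.mp h2
  have h3' := abs_lt.mp h3
  rw [h1]; linarith [h2'.1, h2'.2, h3'.1, h3'.2]

section EF
variable {d : ℝ≥0∞} {D : CanonicalDomainSystem d} {φ : ℝ → ℝ → ℂ → ℂ}

lemma r_antitone (D : CanonicalDomainSystem d) {a b : ℝ} (ha : 0 ≤ a) (hab : a ≤ b) :
    D.r b ≤ D.r a := by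
  by_contra h
  push_neg at h
  exact absurd (D.omega_anti ha hab)
    (not_le.mpr (omegaFun_lt (D.r_nonneg a ha) h (D.r_lt_one b (ha.trans hab))))

/-- Upper semicontinuity of `r` (one-sided bound suffices for us). -/
lemma r_usc (D : CanonicalDomainSystem d) (hd : 1 ≤ d) {c : ℝ} (hc : 0 ≤ c)
    {ε : ℝ} (hε : 0 < ε) :
    ∃ ρ > 0, ∀ u, 0 ≤ u → |u - c| < ρ → D.r u < D.r c + ε := by
  obtain ⟨g, hgmem, hgint⟩ := D.omega_ACd
  set ε' := min (ε / 2) ((1 - D.r c) / 2) with hε'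
  have hε'pos : 0 < ε' := lt_min (by linarith) (by
    have := D.r_lt_one c hc; linarith)
  have hrcε : D.r c + ε' < 1 := by
    have h1 : ε' ≤ (1 - D.r c) / 2 := min_le_right _ _
    have := D.r_lt_one c hc; linarith
  set η := omegaFun (D.r c + ε') - omegaFun (D.r c) with hη
  have hηpos : 0 < η := by
    have := omegaFun_lt (D.r_nonneg c hc) (by linarith) hrcε
    simp only [hη]; linarith
  -- continuity of t ↦ omegaFun (r t) at c within [0, ∞)
  have hint : IntegrableOn g (Icc 0 (c + 1)) := k_integrableOn hd (hgmem (c + 1) (by linarith))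
  obtain ⟨ρ, hρ, hsmall⟩ := integral_small (by linarith : (0:ℝ) ≤ c + 1) hint.norm
    (⟨hc, by linarith⟩ : c ∈ Icc (0:ℝ) (c+1)) (show (0:ℝ) < η/2 by linarith)
  refine ⟨min ρ 1, lt_min hρ one_pos, fun u hu hucl => ?_⟩
  have hu1 : |u - c| < ρ := lt_of_lt_of_le hucl (min_le_left _ _)
  have hu2 : |u - c| < 1 := lt_of_lt_of_le hucl (min_le_right _ _)
  have huI : u ∈ Icc (0:ℝ) (c + 1) := ⟨hu, by
    have := abs_lt.mp hu2; linarith⟩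
  have hcI : c ∈ Icc (0:ℝ) (c + 1) := ⟨hc, by linarith⟩
  have hcc : |c - c| < ρ := by simpa using hρ
  -- |ω(r u) - ω(r c)| < η
  have hωdiff : |omegaFun (D.r u) - omegaFun (D.r c)| < η := by
    have hrep : omegaFun (D.r u) - omegaFun (D.r c) = ∫ t in c..u, g t := by
      have h1 := hgint 0 u le_rfl hu
      have h2 := hgint 0 c le_rfl hc
      have hIIc : IntervalIntegrable g volume 0 c := by
        refine (hint.mono_set ?_).intervalIntegrable
        rw [uIcc_of_le hc]; exact Icc_subset_Icc le_rfl (by linarith)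
      have hIIcu : IntervalIntegrable g volume c u := by
        refine (hint.mono_set ?_).intervalIntegrable
        rcases le_total c u with h | h
        · rw [uIcc_of_le h]; exact Icc_subset_Icc hc huI.2
        · rw [uIcc_of_ge h]; exact Icc_subset_Icc hu (by linarith)
      have hadd := intervalIntegral.integral_add_adjacent_intervals hIIc hIIcu
      have heq : omegaFun (D.r u) - omegaFun (D.r c) =
          (∫ t in (0:ℝ)..u, g t) - ∫ t in (0:ℝ)..c, g t := by
        rw [← h1, ← h2]; ring
      rw [heq, ← hadd]; ring
    have key : ∀ x y : ℝ, x ∈ Icc (0:ℝ) (c+1) → y ∈ Icc (0:ℝ) (c+1) → x ≤ y →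
        |x - c| < ρ → |y - c| < ρ → |∫ t in x..y, g t| ≤ η / 2 := by
      intro x y hx hy hxy hxc hyc
      calc |∫ t in x..y, g t| ≤ ∫ t in x..y, ‖g t‖ := by
            rw [← Real.norm_eq_abs]
            exact intervalIntegral.norm_integral_le_integral_norm hxy
        _ ≤ η / 2 := hsmall x y hx hy hxy hxc hyc
    rw [hrep]
    rcases le_total c u with h | h
    · have := key c u hcI huI h hcc hu1
      linarith [abs_nonneg (∫ t in c..u, g t)]
    · rw [intervalIntegral.integral_symm, abs_neg]
      have := key u c huI hcI h hu1 hcc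
      linarith
  have hmono : omegaFun (D.r c + ε') ≤ omegaFun (D.r u) ∨ D.r u < D.r c + ε' := by
    rcases lt_or_ge (D.r u) (D.r c + ε') with h | h
    · exact Or.inr h
    · exact Or.inl (omegaFun_mono (by linarith [D.r_nonneg c hc]) h (D.r_lt_one u hu))
  rcases hmono with h | h
  · exfalso
    have := abs_lt.mp hωdiff
    simp only [hη] at *
    linarith
  · calc D.r u < D.r c + ε' := h
      _ ≤ D.r c + ε := by have := min_le_left (ε/2) ((1 - D.r c)/2); simp only [hε'] at *; linarith

end EF

end Chunk2

section Chunk3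


variable {d : ℝ≥0∞} {D : CanonicalDomainSystem d} {φ : ℝ → ℝ → ℂ → ℂ}

lemma annulus_incl (D : CanonicalDomainSystem d) {a b : ℝ} (ha : 0 ≤ a) (hab : a ≤ b) :
    stdAnnulus (D.r a) ⊆ stdAnnulus (D.r b) :=
  stdAnnulus_mono (r_antitone D ha hab)

lemma phi_norm_le_one (hφ : IsEvolutionFamily d D φ) {s t : ℝ} (hs : 0 ≤ s) (hst : s ≤ t)
    {z : ℂ} (hz : z ∈ stdAnnulus (D.r s)) : ‖φ s t z‖ ≤ 1 :=
  norm_le_one_of_mem_stdAnnulus (hφ.mapsTo hs hst hz)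

lemma phi_ne_zero (hφ : IsEvolutionFamily d D φ) {s t : ℝ} (hs : 0 ≤ s) (hst : s ≤ t)
    {z : ℂ} (hz : z ∈ stdAnnulus (D.r s)) : φ s t z ≠ 0 :=
  ne_zero_of_mem_stdAnnulus (D.r_nonneg t (hs.trans hst)) (hφ.mapsTo hs hst hz)

/-- Pointwise continuity in the time parameters, from (EF3). -/
lemma phi_point_time_cont (hφ : IsEvolutionFamily d D φ) (hd : 1 ≤ d)
    {S T : ℝ} (hS : 0 ≤ S) (hST : S ≤ T) {z : ℂ} (hz : z ∈ stdAnnulus (D.r S))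
    {c : ℝ} (hc : c ∈ Icc S T) {ε : ℝ} (hε : 0 < ε) :
    ∃ ρ > 0, ∀ s' u v : ℝ, S ≤ s' → s' ≤ u → u ≤ v → v ≤ T →
      |u - c| < ρ → |v - c| < ρ → dist (φ s' u z) (φ s' v z) ≤ ε := by
  obtain ⟨k, hknn, hkmem, hkbd⟩ := hφ.ef3 S T hS hST z hz
  obtain ⟨ρ, hρ, hsmall⟩ := integral_small hST (k_integrableOn hd hkmem) hc hε
  refine ⟨ρ, hρ, fun s' u v hSs' hs'u huv hvT hunear hvnear => ?_⟩
  have h1 := hkbd s' u v hSs' hs'u huv hvT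
  rw [Complex.dist_eq]
  refine h1.trans (hsmall u v ⟨hSs'.trans hs'u, huv.trans hvT⟩
    ⟨(hSs'.trans hs'u).trans huv, hvT⟩ huv hunear hvnear)

/-- Uniform (in `z ∈ K`) continuity of `t ↦ φ s t z` at `c`. -/
lemma phi_unif_time (hφ : IsEvolutionFamily d D φ) (hd : 1 ≤ d)
    {s : ℝ} (hs : 0 ≤ s) {K : Set ℂ} (hK : IsCompact K)
    (hKA : K ⊆ stdAnnulus (D.r s)) {c : ℝ} (hc : s ≤ c) {ε : ℝ} (hε : 0 < ε) :
    ∃ ρ > 0, ∀ u, s ≤ u → |u - c| < ρ → ∀ z ∈ K, dist (φ s u z) (φ s c z) ≤ ε := by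
  rcases K.eq_empty_or_nonempty with rfl | hKne
  · exact ⟨1, one_pos, fun u _ _ z hz => absurd hz (notMem_empty z)⟩
  obtain ⟨R, hR, hball⟩ := compact_margin hK (isOpen_stdAnnulus _) hKA
  set η := min (ε * R / 24) (R / 8) with hη
  have hηpos : 0 < η := lt_min (by positivity) (by positivity)
  obtain ⟨P, hPK, hPcov⟩ := hK.elim_nhds_subcover (fun p => ball p η)
    (fun p _ => ball_mem_nhds p hηpos)
  -- for each net point, a pointwise modulus
  have hchoice : ∀ p : ℂ, ∃ ρp > 0, p ∈ K →
      ∀ u, s ≤ u → u ≤ c + 1 → |u - c| < ρp → dist (φ s u p) (φ s c p) ≤ ε / 3 := by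
    intro p
    by_cases hp : p ∈ K
    · obtain ⟨ρp, hρp, hcont⟩ := phi_point_time_cont hφ hd hs (by linarith : s ≤ c + 1)
        (hKA hp) (⟨hc, by linarith⟩ : c ∈ Icc s (c+1)) (by linarith : (0:ℝ) < ε/3)
      refine ⟨ρp, hρp, fun _ u hsu huT hunear => ?_⟩
      have hcc : |c - c| < ρp := by simpa using hρp
      rcases le_total u c with h | h
      · exact hcont s u c le_rfl hsu h (by linarith) hunear hcc
      · rw [dist_comm]
        exact hcont s c u le_rfl hc h huT hcc hunear
    · exact ⟨1, one_pos, fun hp' => absurd hp' hp⟩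
  choose ρp hρppos hρpspec using hchoice
  have hPne : P.Nonempty := by
    by_contra h
    rw [Finset.not_nonempty_iff_eq_empty] at h
    obtain ⟨z, hz⟩ := hKne
    have := hPcov hz
    simp [h] at this
  set ρ := min (min 1 (P.inf' hPne ρp)) 1 with hρdef
  have hρpos : 0 < ρ := by
    refine lt_min (lt_min one_pos ?_) one_pos
    rw [Finset.lt_inf'_iff]
    exact fun p _ => hρppos p
  refine ⟨ρ, hρpos, fun u hsu hunear z hz => ?_⟩
  obtain ⟨p, hpP, hpz⟩ : ∃ p ∈ P, z ∈ ball p η := by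
    have := hPcov hz
    simpa using this
  have hpK : p ∈ K := hPK p hpP
  have hzball : z ∈ ball p (R / 4) := by
    rw [mem_ball] at hpz ⊢
    calc dist z p < η := hpz
      _ ≤ R / 8 := min_le_right _ _
      _ < R / 4 := by linarith
  have hpball : p ∈ ball p (R / 4) := mem_ball_self (by linarith)
  have hdiffu : DifferentiableOn ℂ (φ s u) (ball p R) :=
    (hφ.holo hs hsu).mono (hball p hpK)
  have hdiffc : DifferentiableOn ℂ (φ s c) (ball p R) :=
    (hφ.holo hs hc).mono (hball p hpK)
  have hbd : ∀ t', s ≤ t' → ∀ x ∈ ball p R, ‖φ s t' x‖ ≤ 1 := fun t' ht' x hx =>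
    phi_norm_le_one hφ hs ht' (hball p hpK hx)
  have h1 : dist (φ s u z) (φ s u p) ≤ 4 * 1 / R * dist z p :=
    schwarz_pair hR hdiffu (hbd u hsu) hzball hpball
  have h3 : dist (φ s c p) (φ s c z) ≤ 4 * 1 / R * dist z p := by
    rw [dist_comm]
    exact schwarz_pair hR hdiffc (hbd c hc) hzball hpball
  have h2 : dist (φ s u p) (φ s c p) ≤ ε / 3 := by
    refine hρpspec p hpK u hsu ?_ ?_
    · have h4 : |u - c| < 1 := lt_of_lt_of_le hunear (min_le_right _ _)
      have := abs_lt.mp h4; linarith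
    · calc |u - c| < ρ := hunear
        _ ≤ P.inf' hPne ρp := le_trans (min_le_left _ _) (min_le_right _ _)
        _ ≤ ρp p := Finset.inf'_le _ hpP
  have hdzp : dist z p ≤ η := (mem_ball.mp hpz).le
  have hηR : 4 * 1 / R * dist z p ≤ ε / 6 := by
    have h5 : η ≤ ε * R / 24 := min_le_left _ _
    have h6 : dist z p ≤ ε * R / 24 := hdzp.trans h5
    calc 4 * 1 / R * dist z p ≤ 4 * 1 / R * (ε * R / 24) := by
          apply mul_le_mul_of_nonneg_left h6 (by positivity)
      _ = ε / 6 := by field_simp; ring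
  calc dist (φ s u z) (φ s c z) ≤
        dist (φ s u z) (φ s u p) + dist (φ s u p) (φ s c p) + dist (φ s c p) (φ s c z) :=
          dist_triangle4 _ _ _ _
    _ ≤ ε / 6 + ε / 3 + ε / 6 := by
        refine add_le_add (add_le_add (h1.trans hηR) h2) (h3.trans hηR)
    _ ≤ ε := by linarith


end Chunk3

section Chunk4


variable {d : ℝ≥0∞} {D : CanonicalDomainSystem d} {φ : ℝ → ℝ → ℂ → ℂ}

/-- Univalence of evolution family elements. -/
theorem phi_injOn (hφ : IsEvolutionFamily d D φ) (hd : 1 ≤ d)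
    {s τ : ℝ} (hs : 0 ≤ s) (hsτ : s ≤ τ) :
    InjOn (φ s τ) (stdAnnulus (D.r s)) := by
  intro z1 hz1 z2 hz2 heq
  by_contra hne
  set E := {v | v ∈ Icc s τ ∧ φ s v z1 = φ s v z2} with hEdef
  have hτE : τ ∈ E := ⟨⟨hsτ, le_rfl⟩, heq⟩
  have hEne : E.Nonempty := ⟨τ, hτE⟩
  have hbdd : BddBelow E := ⟨s, fun v hv => hv.1.1⟩
  set c := sInf E with hcdef
  have hsc : s ≤ c := le_csInf hEne fun v hv => hv.1.1
  have hcτ : c ≤ τ := csInf_le hbdd hτE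
  have h0c : 0 ≤ c := hs.trans hsc
  have hKcpt : IsCompact ({z1, z2} : Set ℂ) := (Set.toFinite _).isCompact
  have hKA : ({z1, z2} : Set ℂ) ⊆ stdAnnulus (D.r s) := by
    rintro z hz
    rcases hz with rfl | hz
    · exact hz1
    · rw [mem_singleton_iff] at hz; rw [hz]; exact hz2
  have hz1K : z1 ∈ ({z1, z2} : Set ℂ) := mem_insert _ _
  have hz2K : z2 ∈ ({z1, z2} : Set ℂ) := by simp
  -- c ∈ E
  have hcE : φ s c z1 = φ s c z2 := by
    by_contra hne2
    have hdpos : 0 < dist (φ s c z1) (φ s c z2) := dist_pos.mpr hne2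
    obtain ⟨ρ, hρ, hcont⟩ := phi_unif_time hφ hd hs hKcpt hKA hsc
      (show (0:ℝ) < dist (φ s c z1) (φ s c z2) / 3 by linarith)
    obtain ⟨v, hvE, hvc⟩ := (csInf_lt_iff hbdd hEne).mp
      (show sInf E < c + ρ by rw [← hcdef]; linarith)
    have hvge : c ≤ v := csInf_le hbdd hvE
    have hvnear : |v - c| < ρ := abs_lt.mpr ⟨by linarith, by linarith⟩
    have h1 := hcont v hvE.1.1 hvnear z1 hz1K
    have h2 := hcont v hvE.1.1 hvnear z2 hz2K
    have htri := dist_triangle4 (φ s c z1) (φ s v z1) (φ s v z2) (φ s c z2)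
    have hmid : dist (φ s v z1) (φ s v z2) = 0 := by rw [hvE.2, dist_self]
    have e1 : dist (φ s c z1) (φ s v z1) = dist (φ s v z1) (φ s c z1) := dist_comm _ _
    linarith [htri, hmid, e1, h1, h2]
  have hcs : s < c := by
    rcases eq_or_lt_of_le hsc with h | h
    · exfalso
      apply hne
      rw [← h] at hcE
      rwa [hφ.ef1 s hs z1 hz1, hφ.ef1 s hs z2 hz2] at hcE
    · exact h
  set w := φ s c z1 with hwdef
  have hwA : w ∈ stdAnnulus (D.r c) := hφ.mapsTo hs hsc hz1
  set aw := ‖w‖ with hawdef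
  have haw1 : aw < 1 := hwA.2
  have hawr : D.r c < aw := hwA.1
  have hr0 : 0 ≤ D.r c := D.r_nonneg c h0c
  set δ := min ((1 - aw) / 5) ((aw - D.r c) / 9) with hδdef
  have hδpos : 0 < δ := lt_min (by linarith) (by linarith)
  have hδa : δ ≤ (1 - aw) / 5 := min_le_left _ _
  have hδb : δ ≤ (aw - D.r c) / 9 := min_le_right _ _
  have hδ1 : aw + 4 * δ < 1 := by linarith
  have hδ2 : D.r c + 8 * δ < aw := by linarith
  obtain ⟨ρ0, hρ0, hrusc⟩ := r_usc D hd h0c (show (0:ℝ) < 4 * δ by linarith)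
  -- ball inclusion
  have hBsub : ∀ u, 0 ≤ u → |u - c| < ρ0 → ball w (4 * δ) ⊆ stdAnnulus (D.r u) := by
    intro u hu hnear z hzB
    rw [mem_ball, dist_eq_norm] at hzB
    have h1 : |‖z‖ - ‖w‖| ≤ ‖z - w‖ := abs_norm_sub_norm_le _ _
    have h1' := abs_lt.mp (lt_of_le_of_lt h1 hzB)
    have hnw : ‖w‖ = aw := by rw [hawdef]
    have hru : D.r u < D.r c + 4 * δ := hrusc u hu hnear
    constructor
    · rw [hnw] at h1'; linarith [h1'.1]
    · rw [hnw] at h1'; linarith [h1'.2]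
  set u0 := max s (c - ρ0 / 2) with hu0def
  have hu0s : s ≤ u0 := le_max_left _ _
  have hu0c : u0 < c := max_lt hcs (by linarith)
  have h0u0 : 0 ≤ u0 := hs.trans hu0s
  have hBu : ∀ u, u0 ≤ u → u ≤ c → ball w (4 * δ) ⊆ stdAnnulus (D.r u) := by
    intro u hu huc
    refine hBsub u (h0u0.trans hu) (abs_lt.mpr ⟨?_, by linarith⟩)
    have h1 : c - ρ0 / 2 ≤ u0 := le_max_right _ _
    linarith
  have hwu0 : w ∈ stdAnnulus (D.r u0) :=
    hBu u0 le_rfl hu0c.le (mem_ball_self (by linarith))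
  -- finite net of closedBall w (δ/2)
  set η := δ * δ / 100 with hηdef
  have hηpos : 0 < η := by positivity
  obtain ⟨P, hPmem, hPcov⟩ := (isCompact_closedBall w (δ / 2)).elim_nhds_subcover
    (fun p => ball p η) (fun p _ => ball_mem_nhds p hηpos)
  have hcbsub : closedBall w (δ / 2) ⊆ ball w (4 * δ) := by
    intro x hx
    rw [mem_closedBall] at hx
    rw [mem_ball]
    linarith
  have hchoice : ∀ p : ℂ, ∃ ρp > 0, p ∈ closedBall w (δ / 2) →
      ∀ u, u0 ≤ u → u ≤ c → |u - c| < ρp → dist (φ u c p) p ≤ δ / 100 := by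
    intro p
    by_cases hp : p ∈ closedBall w (δ / 2)
    · have hpA : p ∈ stdAnnulus (D.r u0) := hBu u0 le_rfl hu0c.le (hcbsub hp)
      obtain ⟨ρp, hρppos, hcont⟩ := phi_point_time_cont hφ hd h0u0 hu0c.le hpA
        (⟨hu0c.le, le_rfl⟩ : c ∈ Icc u0 c) (show (0:ℝ) < δ / 100 by linarith)
      refine ⟨ρp, hρppos, fun _ u huu0 huc hnear => ?_⟩
      have hcc : |c - c| < ρp := by simpa using hρppos
      have h1 := hcont u u c huu0 le_rfl huc le_rfl hnear hcc
      have hef1 : φ u u p = p := hφ.ef1 u (h0u0.trans huu0) p (hBu u huu0 huc (hcbsub hp))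
      rw [hef1] at h1
      rwa [dist_comm]
    · exact ⟨1, one_pos, fun hp' => absurd hp' hp⟩
  choose ρp hρppos hρpspec using hchoice
  have hPne : P.Nonempty := by
    by_contra h
    rw [Finset.not_nonempty_iff_eq_empty] at h
    have hwP := hPcov (mem_closedBall_self (by linarith : (0:ℝ) ≤ δ / 2))
    simp [h] at hwP
  obtain ⟨ρ2, hρ2, hnear2⟩ := phi_unif_time hφ hd hs hKcpt hKA hsc
    (show (0:ℝ) < δ / 9 by linarith)
  set ρmin := min (min ρ2 1) (P.inf' hPne ρp) with hρmindef
  have hρminpos : 0 < ρmin := by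
    refine lt_min (lt_min hρ2 one_pos) ?_
    rw [Finset.lt_inf'_iff]
    exact fun p _ => hρppos p
  set u := max u0 (c - ρmin / 2) with hudef
  have hu0u : u0 ≤ u := le_max_left _ _
  have huc : u < c := max_lt hu0c (by linarith)
  have hsu : s ≤ u := hu0s.trans hu0u
  have hunear : |u - c| < ρmin := by
    refine abs_lt.mpr ⟨?_, by linarith⟩
    have h1 : c - ρmin / 2 ≤ u := le_max_right _ _
    linarith
  have hunear2 : |u - c| < ρ2 :=
    hunear.trans_le ((min_le_left _ _).trans (min_le_left _ _))
  have hunearp : ∀ p ∈ P, |u - c| < ρp p := fun p hp =>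
    hunear.trans_le ((min_le_right _ _).trans (Finset.inf'_le _ hp))
  set a := φ s u z1 with hadef
  set b := φ s u z2 with hbdef
  have huE : u ∉ E := fun huE => absurd (csInf_le hbdd huE) (not_le.mpr huc)
  have hab : a ≠ b := fun h => huE ⟨⟨hsu, by linarith⟩, h⟩
  have hfa : φ u c a = w := (hφ.ef2 hs hsu huc.le z1 hz1).symm
  have hfb : φ u c b = w := by
    rw [hcE]
    exact (hφ.ef2 hs hsu huc.le z2 hz2).symm
  have haw : a ∈ ball w (δ / 8) := by
    have h1 := hnear2 u hsu hunear2 z1 hz1K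
    rw [mem_ball]
    calc dist a w = dist (φ s u z1) (φ s c z1) := rfl
      _ ≤ δ / 9 := h1
      _ < δ / 8 := by linarith
  have hbw : b ∈ ball w (δ / 8) := by
    have h2 := hnear2 u hsu hunear2 z2 hz2K
    rw [mem_ball]
    calc dist b w = dist (φ s u z2) (φ s c z2) := by rw [hcE]
      _ ≤ δ / 9 := h2
      _ < δ / 8 := by linarith
  -- the near-identity map g
  have hgdiff : DifferentiableOn ℂ (fun z => φ u c z - z) (ball w (4 * δ)) :=
    ((hφ.holo (hs.trans hsu) huc.le).mono (hBu u hu0u huc.le)).sub differentiableOn_id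
  have hgbd2 : ∀ z ∈ ball w (4 * δ), ‖φ u c z - z‖ ≤ 2 := by
    intro z hzB
    have hzA : z ∈ stdAnnulus (D.r u) := hBu u hu0u huc.le hzB
    have h1 : ‖φ u c z‖ ≤ 1 := phi_norm_le_one hφ (hs.trans hsu) huc.le hzA
    have h2 : ‖z‖ ≤ 1 := norm_le_one_of_mem_stdAnnulus hzA
    calc ‖φ u c z - z‖ ≤ ‖φ u c z‖ + ‖z‖ := norm_sub_le _ _
      _ ≤ 2 := by linarith
  have hsmallg : ∀ z ∈ ball w (δ / 2), ‖φ u c z - z‖ ≤ δ / 25 := by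
    intro z hzB
    have hzcb : z ∈ closedBall w (δ / 2) := ball_subset_closedBall hzB
    obtain ⟨p, hpP, hpz⟩ : ∃ p ∈ P, z ∈ ball p η := by
      have := hPcov hzcb; simpa using this
    have hpcb : p ∈ closedBall w (δ / 2) := hPmem p hpP
    have hzb4 : z ∈ ball w (4 * δ / 4) := by
      rw [mem_ball]
      have := mem_ball.mp hzB
      linarith
    have hpb4 : p ∈ ball w (4 * δ / 4) := by
      rw [mem_ball]
      have := mem_closedBall.mp hpcb
      linarith
    have hlip := schwarz_pair (show (0:ℝ) < 4 * δ by linarith) hgdiff hgbd2 hzb4 hpb4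
    have hdzp : dist z p < η := mem_ball.mp hpz
    have hlip2 : dist (φ u c z - z) (φ u c p - p) ≤ δ / 50 := by
      have hc1 : 4 * 2 / (4 * δ) * dist z p ≤ 4 * 2 / (4 * δ) * η := by
        apply mul_le_mul_of_nonneg_left hdzp.le (by positivity)
      have hc2 : 4 * 2 / (4 * δ) * η = δ / 50 := by
        rw [hηdef]; field_simp; ring
      linarith [hlip]
    have hpoint : dist (φ u c p) p ≤ δ / 100 :=
      hρpspec p hpcb u hu0u huc.le (hunearp p hpP)
    calc ‖φ u c z - z‖ = dist (φ u c z - z) 0 := by rw [dist_zero_right]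
      _ ≤ dist (φ u c z - z) (φ u c p - p) + dist (φ u c p - p) 0 := dist_triangle _ _ _
      _ ≤ δ / 50 + δ / 100 := by
          refine add_le_add hlip2 ?_
          rw [dist_zero_right, ← dist_eq_norm]
          exact hpoint
      _ ≤ δ / 25 := by linarith
  -- final contraction estimate
  have hawb : a ∈ ball w (δ / 2 / 4) := by
    rw [mem_ball]; have := mem_ball.mp haw; linarith
  have hbwb : b ∈ ball w (δ / 2 / 4) := by
    rw [mem_ball]; have := mem_ball.mp hbw; linarith
  have hsub2 : ball w (δ / 2) ⊆ ball w (4 * δ) := by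
    intro x hx; rw [mem_ball] at hx ⊢; linarith
  have hfin := schwarz_pair (show (0:ℝ) < δ / 2 by linarith) (hgdiff.mono hsub2)
    hsmallg hawb hbwb
  have hgab : (φ u c a - a) - (φ u c b - b) = b - a := by
    rw [hfa, hfb]; ring
  have hd1 : dist (φ u c a - a) (φ u c b - b) = dist a b := by
    rw [dist_eq_norm, hgab, dist_eq_norm, norm_sub_rev]
  rw [hd1] at hfin
  have hc3 : 4 * (δ / 25) / (δ / 2) = 8 / 25 := by
    field_simp; ring
  rw [hc3] at hfin
  have hdpos : 0 < dist a b := dist_pos.mpr hab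
  nlinarith [hfin, hdpos]

end Chunk4

section Chunk5


/-- Montel-type theorem: a sequence of holomorphic functions on an open set `A`,
uniformly bounded by 1, has a subsequence converging uniformly on compacts. -/
theorem montel {A : Set ℂ} (hA : IsOpen A) (hAne : A.Nonempty) (F : ℕ → ℂ → ℂ)
    (hdiff : ∀ n, DifferentiableOn ℂ (F n) A)
    (hbd : ∀ n, ∀ z ∈ A, ‖F n z‖ ≤ 1) :
    ∃ σ : ℕ → ℕ, StrictMono σ ∧ ∃ ψ : ℂ → ℂ,
      ∀ K : Set ℂ, IsCompact K → K ⊆ A →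
        TendstoUniformlyOn (fun n => F (σ n)) ψ atTop K := by
  haveI : Nonempty ↥A := hAne.to_subtype
  set u : ℕ → ℂ := fun j => (TopologicalSpace.denseSeq ↥A j : ℂ) with hudef
  have huA : ∀ j, u j ∈ A := fun j => (TopologicalSpace.denseSeq ↥A j).2
  have hdense : ∀ z ∈ A, ∀ ε > 0, ∃ j, dist z (u j) < ε := by
    intro z hz ε hε
    have hdr := TopologicalSpace.denseRange_denseSeq ↥A
    have hmem := hdr.closure_eq ▸ mem_univ (⟨z, hz⟩ : ↥A)
    rw [Metric.mem_closure_iff] at hmem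
    obtain ⟨y, ⟨j, rfl⟩, hy⟩ := hmem ε hε
    exact ⟨j, by rwa [Subtype.dist_eq] at hy⟩
  -- extract pointwise convergent subsequence via compactness of the product
  set x : ℕ → (ℕ → ℂ) := fun n j => F n (u j) with hxdef
  have hxmem : ∀ n, x n ∈ Set.pi univ (fun _ : ℕ => closedBall (0:ℂ) 1) := by
    intro n
    rw [mem_univ_pi]
    intro j
    rw [mem_closedBall_zero_iff]
    exact hbd n (u j) (huA j)
  obtain ⟨L, -, σ, hσ, hLconv⟩ :=
    (isCompact_univ_pi fun _ : ℕ => isCompact_closedBall (0:ℂ) 1).tendsto_subseq hxmem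
  have hptwise : ∀ j, Tendsto (fun n => F (σ n) (u j)) atTop (𝓝 (L j)) := by
    intro j
    exact tendsto_pi_nhds.mp hLconv j
  -- uniform Cauchy on compacts
  have hucs : ∀ K : Set ℂ, IsCompact K → K ⊆ A →
      UniformCauchySeqOn (fun n => F (σ n)) atTop K := by
    intro K hK hKA
    rw [uniformCauchySeqOn_iff]
    intro ε hε
    obtain ⟨R, hR, hball⟩ := compact_margin hK hA hKA
    set η := min (ε * R / 24) (R / 8) with hηdef
    have hηpos : 0 < η := lt_min (by positivity) (by positivity)
    have hcover : K ⊆ ⋃ j, ball (u j) η := by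
      intro z hz
      obtain ⟨j, hj⟩ := hdense z (hKA hz) η hηpos
      exact mem_iUnion.mpr ⟨j, mem_ball.mpr hj⟩
    obtain ⟨J, hJ⟩ := hK.elim_finite_subcover (fun j => ball (u j) η)
      (fun j => isOpen_ball) hcover
    have hNj : ∀ j : ℕ, ∃ N, ∀ m ≥ N, ∀ n ≥ N,
        dist (F (σ m) (u j)) (F (σ n) (u j)) < ε / 3 := by
      intro j
      have hc := (hptwise j).cauchySeq
      rw [Metric.cauchySeq_iff] at hc
      exact hc (ε / 3) (by linarith)
    choose Ns hNs using hNj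
    set N := J.sup Ns with hNdef
    refine ⟨N, fun m hm n hn z hz => ?_⟩
    obtain ⟨j, hjJ, hjz⟩ : ∃ j ∈ J, z ∈ ball (u j) η := by
      have := hJ hz; simpa using this
    have hNj' : Ns j ≤ N := Finset.le_sup hjJ
    have hmid := hNs j m (le_trans hNj' hm) n (le_trans hNj' hn)
    -- Schwarz estimates around z
    have hzb : z ∈ ball z (R / 4) := mem_ball_self (by linarith)
    have hub : u j ∈ ball z (R / 4) := by
      rw [mem_ball] at hjz ⊢
      rw [dist_comm]
      calc dist z (u j) < η := hjz
        _ ≤ R / 8 := min_le_right _ _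
        _ < R / 4 := by linarith
    have hdzu : dist (u j) z ≤ η := by
      rw [dist_comm]; exact (mem_ball.mp hjz).le
    have hest : ∀ n' : ℕ, dist (F (σ n') z) (F (σ n') (u j)) ≤ ε / 6 := by
      intro n'
      have h1 := schwarz_pair hR ((hdiff (σ n')).mono (hball z hz))
        (fun x hx => hbd (σ n') x (hball z hz hx)) hzb hub
      have h2 : dist z (u j) ≤ η := by rw [dist_comm]; exact hdzu
      calc dist (F (σ n') z) (F (σ n') (u j)) ≤ 4 * 1 / R * dist z (u j) := h1
        _ ≤ 4 * 1 / R * (ε * R / 24) := by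
            apply mul_le_mul_of_nonneg_left (h2.trans (min_le_left _ _)) (by positivity)
        _ = ε / 6 := by field_simp; ring
    calc dist (F (σ m) z) (F (σ n) z) ≤
          dist (F (σ m) z) (F (σ m) (u j)) + dist (F (σ m) (u j)) (F (σ n) (u j)) +
            dist (F (σ n) (u j)) (F (σ n) z) := dist_triangle4 _ _ _ _
      _ ≤ ε / 6 + ε / 3 + ε / 6 := by
          refine add_le_add (add_le_add (hest m) hmid.le) ?_
          rw [dist_comm]; exact hest n
      _ < ε := by linarith
  -- pointwise limits exist
  have hlim : ∀ z ∈ A, ∃ l, Tendsto (fun n => F (σ n) z) atTop (𝓝 l) := by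
    intro z hz
    have hc : CauchySeq (fun n => F (σ n) z) := by
      rw [Metric.cauchySeq_iff]
      intro ε hε
      have := hucs {z} isCompact_singleton (singleton_subset_iff.mpr hz)
      rw [uniformCauchySeqOn_iff] at this
      obtain ⟨N, hN⟩ := this ε hε
      exact ⟨N, fun m hm n hn => hN m hm n hn z rfl⟩
    exact cauchySeq_tendsto_of_complete hc
  classical
  refine ⟨σ, hσ, fun z => if hz : z ∈ A then Classical.choose (hlim z hz) else 0, ?_⟩
  intro K hK hKA
  refine (hucs K hK hKA).tendstoUniformlyOn_of_tendsto fun z hz => ?_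
  rw [dif_pos (hKA hz)]
  exact Classical.choose_spec (hlim z (hKA hz))


end Chunk5

section Chunk6


/-- Hurwitz-type theorem: if `F n → ψ` locally uniformly on the open preconnected
set `A`, `ψ` is non-constant with `ψ z0 = w`, then eventually `F n` attains the
value `w` near `z0`. -/
theorem hurwitz_attains {A : Set ℂ} (hA : IsOpen A) (hAc : IsPreconnected A)
    {F : ℕ → ℂ → ℂ} {ψ : ℂ → ℂ}
    (hFd : ∀ n, DifferentiableOn ℂ (F n) A)
    (hψd : DifferentiableOn ℂ ψ A)
    (hconv : ∀ K : Set ℂ, IsCompact K → K ⊆ A → TendstoUniformlyOn F ψ atTop K)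
    {z0 : ℂ} (hz0 : z0 ∈ A) {w : ℂ} (hw : ψ z0 = w)
    (hnc : ∃ z1 ∈ A, ψ z1 ≠ w) {ε : ℝ} (hε : 0 < ε) :
    ∃ N, ∀ n ≥ N, ∃ a ∈ A, dist a z0 < ε ∧ F n a = w := by
  -- isolated zeros of ψ - w
  have hψa : AnalyticOnNhd ℂ (fun z => ψ z - w) A :=
    (hψd.sub_const w).analyticOnNhd hA
  have hcase := (hψa z0 hz0).eventually_eq_zero_or_eventually_ne_zero
  rcases hcase with hzero | hne
  · exfalso
    obtain ⟨z1, hz1A, hz1⟩ := hnc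
    have := hψa.eqOn_zero_of_preconnected_of_eventuallyEq_zero hAc hz0 hzero hz1A
    simp only [Pi.zero_apply] at this
    exact hz1 (sub_eq_zero.mp this)
  -- radius choice
  obtain ⟨ρ0, hρ0, hρ0ne⟩ : ∃ ρ0 > 0, ∀ z, dist z z0 < ρ0 → z ≠ z0 → ψ z - w ≠ 0 := by
    rw [eventually_nhdsWithin_iff] at hne
    rw [Metric.eventually_nhds_iff] at hne
    obtain ⟨ρ0, hρ0, h⟩ := hne
    exact ⟨ρ0, hρ0, fun z hz hzz0 => h hz (mem_compl_singleton_iff.mpr hzz0)⟩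
  obtain ⟨R0, hR0, hball⟩ := compact_margin (isCompact_singleton (x := z0)) hA
    (singleton_subset_iff.mpr hz0)
  set ρ := min (min (ρ0 / 2) (ε / 2)) (R0 / 2) with hρdef
  have hρpos : 0 < ρ := lt_min (lt_min (by linarith) (by linarith)) (by linarith)
  have hρlt : ρ < R0 := lt_of_le_of_lt (min_le_right _ _) (by linarith)
  have hcbA : closedBall z0 ρ ⊆ A := by
    intro x hx
    refine hball z0 rfl ?_
    rw [mem_closedBall] at hx
    rw [mem_ball]
    linarith
  -- minimum of |ψ - w| on the sphere
  have hsph_ne : (sphere z0 ρ).Nonempty := NormedSpace.sphere_nonempty.mpr hρpos.le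
  have hsphA : sphere z0 ρ ⊆ A := fun x hx => hcbA (sphere_subset_closedBall hx)
  have hψc : ContinuousOn (fun z => ‖ψ z - w‖) (sphere z0 ρ) :=
    (((hψd.continuousOn).mono hsphA).sub continuousOn_const).norm
  obtain ⟨x0, hx0s, hx0min⟩ := (isCompact_sphere z0 ρ).exists_isMinOn hsph_ne hψc
  set m := ‖ψ x0 - w‖ with hmdef
  have hmpos : 0 < m := by
    rw [hmdef, norm_pos_iff]
    have hds : dist x0 z0 = ρ := mem_sphere.mp hx0s
    refine hρ0ne x0 ?_ ?_
    · have hlt : ρ < ρ0 := lt_of_le_of_lt ((min_le_left _ _).trans (min_le_left _ _)) (by linarith)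
      rw [hds]; linarith
    · intro h
      rw [h, dist_self] at hds
      linarith
  -- uniform convergence on the closed ball
  have hcb : IsCompact (closedBall z0 ρ) := isCompact_closedBall _ _
  have huc := hconv (closedBall z0 ρ) hcb hcbA
  rw [Metric.tendstoUniformlyOn_iff] at huc
  obtain ⟨N, hN⟩ := (huc (m / 2) (by linarith)).exists_forall_of_atTop
  refine ⟨N, fun n hn => ?_⟩
  by_contra hno
  push_neg at hno
  have key : ∀ z ∈ sphere z0 ρ, m / 2 ≤ ‖F n z - w‖ := by
    intro z hz
    have h1 := hN n hn z (sphere_subset_closedBall hz)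
    have h2 : m ≤ ‖ψ z - w‖ := hx0min hz
    rw [dist_eq_norm] at h1
    have h3 : ‖ψ z - w‖ ≤ ‖ψ z - F n z‖ + ‖F n z - w‖ := by
      have heq : ψ z - w = (ψ z - F n z) + (F n z - w) := by ring
      rw [heq]; exact norm_add_le _ _
    linarith
  have hnovan : ∀ z ∈ closedBall z0 ρ, F n z - w ≠ 0 := by
    intro z hz h0
    rcases eq_or_lt_of_le (mem_closedBall.mp hz) with hzs | hzlt
    · have := key z (mem_sphere.mpr hzs)
      rw [h0, norm_zero] at this
      linarith
    · refine hno z (hcbA hz) (lt_of_lt_of_le hzlt ?_) (sub_eq_zero.mp h0)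
      calc ρ ≤ ε / 2 := (min_le_left _ _).trans (min_le_right _ _)
        _ ≤ ε := by linarith
  set q : ℂ → ℂ := fun z => (F n z - w)⁻¹ with hqdef
  have hqd : DiffContOnCl ℂ q (ball z0 ρ) := by
    constructor
    · refine DifferentiableOn.inv (((hFd n).mono ?_).sub_const w) ?_
      · exact fun x hx => hcbA (ball_subset_closedBall hx)
      · exact fun x hx => hnovan x (ball_subset_closedBall hx)
    · rw [closure_ball z0 hρpos.ne']
      exact ContinuousOn.inv₀ ((((hFd n).continuousOn).mono hcbA).sub continuousOn_const) hnovan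
  have hqsph : ∀ z ∈ frontier (ball z0 ρ), ‖q z‖ ≤ 2 / m := by
    rw [frontier_ball z0 hρpos.ne']
    intro z hz
    have h5 := key z hz
    have h6 : 0 < ‖F n z - w‖ := lt_of_lt_of_le (by linarith) h5
    rw [hqdef]
    simp only [norm_inv]
    have h7 : ‖F n z - w‖⁻¹ ≤ (m / 2)⁻¹ := by
      apply inv_anti₀ (by linarith) h5
    have h8 : (m / 2)⁻¹ = 2 / m := by field_simp
    linarith [h8 ▸ h7]
  have hqz0 : ‖q z0‖ ≤ 2 / m := by
    refine Complex.norm_le_of_forall_mem_frontier_norm_le isBounded_ball hqd hqsph ?_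
    rw [closure_ball z0 hρpos.ne']
    exact mem_closedBall_self hρpos.le
  have h1 := hN n hn z0 (mem_closedBall_self hρpos.le)
  rw [dist_eq_norm, hw] at h1
  have h2 : ‖F n z0 - w‖ < m / 2 := by
    have h2' : ‖w - F n z0‖ = ‖F n z0 - w‖ := norm_sub_rev _ _
    linarith
  have h3 : F n z0 - w ≠ 0 := hnovan z0 (mem_closedBall_self hρpos.le)
  have h4 : 0 < ‖F n z0 - w‖ := norm_pos_iff.mpr h3
  rw [hqdef] at hqz0
  simp only [norm_inv] at hqz0
  have h9 := mul_le_mul_of_nonneg_right hqz0 h4.le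
  rw [inv_mul_cancel₀ h4.ne'] at h9
  have h10 : 2 / m * ‖F n z0 - w‖ < 2 / m * (m / 2) :=
    mul_lt_mul_of_pos_left h2 (by positivity)
  have h11 : 2 / m * (m / 2) = 1 := by field_simp
  linarith


end Chunk6

section Chunk7


lemma hwn_congr {α β : ℝ → ℂ} (h : ∀ x ∈ Icc (0:ℝ) 1, α x = β x) {w : ℂ} {n : ℤ} :
    HasWindingNumber α w n → HasWindingNumber β w n := by
  rintro ⟨g, hg, hge, hgd⟩
  exact ⟨g, hg, fun t ht => by rw [← h t ht]; exact hge t ht, hgd⟩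

/-- Transfer of winding numbers between uniformly-close nonvanishing closed curves. -/
lemma winding_transfer {α β : ℝ → ℂ}
    (hα : ContinuousOn α (Icc 0 1)) (hβ : ContinuousOn β (Icc 0 1))
    (hclα : α 0 = α 1) (hclβ : β 0 = β 1)
    (hne : ∀ x ∈ Icc (0:ℝ) 1, ‖β x - α x‖ < ‖α x‖) {n : ℤ} :
    HasWindingNumber α 0 n → HasWindingNumber β 0 n := by
  rintro ⟨g, hg, hge, hgd⟩
  have hα0 : ∀ x ∈ Icc (0:ℝ) 1, α x ≠ 0 := by
    intro x hx h
    have h1 := hne x hx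
    rw [h, norm_zero] at h1
    exact absurd h1 (not_lt.mpr (norm_nonneg _))
  have hβ0 : ∀ x ∈ Icc (0:ℝ) 1, β x ≠ 0 := by
    intro x hx h
    have h1 := hne x hx
    rw [h, zero_sub, norm_neg] at h1
    exact lt_irrefl _ h1
  have hslit : ∀ x ∈ Icc (0:ℝ) 1, β x / α x ∈ Complex.slitPlane := by
    intro x hx
    rw [Complex.mem_slitPlane_iff]
    left
    have h1 : ‖β x / α x - 1‖ < 1 := by
      have heq : β x / α x - 1 = (β x - α x) / α x := by
        rw [sub_div, div_self (hα0 x hx)]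
      rw [heq, norm_div]
      rw [div_lt_one (norm_pos_iff.mpr (hα0 x hx))]
      exact hne x hx
    have h2 : |(β x / α x - 1).re| ≤ ‖β x / α x - 1‖ := by
      exact Complex.abs_re_le_norm _
    rw [Complex.sub_re, Complex.one_re] at h2
    have h3 := abs_lt.mp (lt_of_le_of_lt h2 h1)
    linarith [h3.1]
  set q : ℝ → ℂ := fun x => Complex.log (β x / α x) with hqdef
  have hq : ContinuousOn q (Icc 0 1) := by
    intro x hx
    have hin : ContinuousWithinAt (fun y => β y / α y) (Icc 0 1) x :=
      (hβ x hx).div (hα x hx) (hα0 x hx)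
    exact ContinuousAt.comp_continuousWithinAt (g := Complex.log)
      (f := fun y => β y / α y) (continuousAt_clog (hslit x hx)) hin
  refine ⟨fun x => g x + q x, hg.add hq, ?_, ?_⟩
  · intro x hx
    have h1 : Complex.exp (g x) = α x := by
      have := hge x hx
      rw [sub_zero] at this
      exact this.symm
    have h2 : Complex.exp (q x) = β x / α x :=
      Complex.exp_log (div_ne_zero (hβ0 x hx) (hα0 x hx))
    rw [sub_zero, Complex.exp_add, h1, h2, mul_div_assoc']
    exact (mul_div_cancel_left₀ (β x) (hα0 x hx)).symm
  · have hq01 : q 1 = q 0 := by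
      rw [hqdef]
      simp only
      rw [← hclα, ← hclβ]
    have : (fun x => g x + q x) 1 - (fun x => g x + q x) 0 = (g 1 - g 0) + (q 1 - q 0) := by
      simp only; ring
    rw [this, hq01, sub_self, add_zero, hgd]

variable {d : ℝ≥0∞} {D : CanonicalDomainSystem d} {φ : ℝ → ℝ → ℂ → ℂ}

/-- Winding numbers are preserved along the evolution. -/
lemma winding_eq_of_evolution (hφ : IsEvolutionFamily d D φ) (hd : 1 ≤ d)
    {s T : ℝ} (hs : 0 ≤ s) (hsT : s ≤ T) {γ : ℝ → ℂ}
    (hγ : IsClosedCurveIn γ (stdAnnulus (D.r s))) (n : ℤ) :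
    HasWindingNumber γ 0 n ↔ HasWindingNumber (fun x => φ s T (γ x)) 0 n := by
  obtain ⟨hγc, hγcl, hγA⟩ := hγ
  set A := stdAnnulus (D.r s) with hAdef
  set Γ := γ '' Icc 0 1 with hΓdef
  have hΓcpt : IsCompact Γ := isCompact_Icc.image_of_continuousOn hγc
  have hΓA : Γ ⊆ A := by rintro z ⟨x, hx, rfl⟩; exact hγA x hx
  have hI01 : (0:ℝ) ∈ Icc (0:ℝ) 1 := by norm_num
  have hI11 : (1:ℝ) ∈ Icc (0:ℝ) 1 := by norm_num
  -- the curve at time u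
  set Cu : ℝ → ℝ → ℂ := fun u x => φ s u (γ x) with hCudef
  have hCucont : ∀ u, s ≤ u → ContinuousOn (Cu u) (Icc 0 1) := by
    intro u hu
    exact ((hφ.holo hs hu).continuousOn).comp hγc (fun x hx => hγA x hx)
  have hCucl : ∀ u, Cu u 0 = Cu u 1 := fun u => by rw [hCudef]; simp only; rw [hγcl]
  have hCune : ∀ u, s ≤ u → ∀ x ∈ Icc (0:ℝ) 1, Cu u x ≠ 0 := by
    intro u hu x hx
    exact phi_ne_zero hφ hs hu (hγA x hx)
  -- local transfer
  have hloc : ∀ c, s ≤ c → ∃ ρ > 0, ∀ u, s ≤ u → |u - c| < ρ →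
      ∀ m : ℤ, (HasWindingNumber (Cu u) 0 m ↔ HasWindingNumber (Cu c) 0 m) := by
    intro c hc
    obtain ⟨x0, hx0I, hx0min⟩ := isCompact_Icc.exists_isMinOn ⟨0, hI01⟩
      ((hCucont c hc).norm)
    set ℓ := ‖Cu c x0‖ with hℓdef
    have hℓpos : 0 < ℓ := norm_pos_iff.mpr (hCune c hc x0 hx0I)
    obtain ⟨ρ, hρ, hunif⟩ := phi_unif_time hφ hd hs hΓcpt hΓA hc
      (show (0:ℝ) < ℓ / 4 by linarith)
    refine ⟨ρ, hρ, fun u hu hnear m => ?_⟩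
    have hclose : ∀ x ∈ Icc (0:ℝ) 1, ‖Cu u x - Cu c x‖ ≤ ℓ / 4 := by
      intro x hx
      have := hunif u hu hnear (γ x) ⟨x, hx, rfl⟩
      rwa [dist_eq_norm] at this
    have hlower : ∀ x ∈ Icc (0:ℝ) 1, ℓ ≤ ‖Cu c x‖ := fun x hx => hx0min hx
    constructor
    · refine winding_transfer (hCucont u hu) (hCucont c hc) (hCucl u) (hCucl c) ?_
      intro x hx
      have h1 := hclose x hx
      have h2 := hlower x hx
      have h3 : ‖Cu u x‖ ≥ ℓ - ℓ / 4 := by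
        have := norm_sub_norm_le (Cu c x) (Cu u x)
        have h4 : ‖Cu c x - Cu u x‖ = ‖Cu u x - Cu c x‖ := norm_sub_rev _ _
        linarith
      have h5 : ‖Cu c x - Cu u x‖ = ‖Cu u x - Cu c x‖ := norm_sub_rev _ _
      calc ‖Cu c x - Cu u x‖ = ‖Cu u x - Cu c x‖ := h5
        _ ≤ ℓ / 4 := h1
        _ < ℓ - ℓ / 4 := by linarith
        _ ≤ ‖Cu u x‖ := h3
    · refine winding_transfer (hCucont c hc) (hCucont u hu) (hCucl c) (hCucl u) ?_
      intro x hx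
      calc ‖Cu u x - Cu c x‖ ≤ ℓ / 4 := hclose x hx
        _ < ℓ := by linarith
        _ ≤ ‖Cu c x‖ := hlower x hx
  -- the set of good times
  set Q : ℝ → Prop := fun u =>
    ∀ m : ℤ, (HasWindingNumber γ 0 m ↔ HasWindingNumber (Cu u) 0 m) with hQdef
  have hQs : Q s := by
    intro m
    have hcongr : ∀ x ∈ Icc (0:ℝ) 1, γ x = Cu s x := by
      intro x hx
      rw [hCudef]
      exact (hφ.ef1 s hs (γ x) (hγA x hx)).symm
    constructor
    · exact hwn_congr hcongr
    · exact hwn_congr fun x hx => (hcongr x hx).symm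
  set S' := {u | u ∈ Icc s T ∧ ∀ v ∈ Icc s u, Q v} with hS'def
  have hsS' : s ∈ S' := by
    refine ⟨⟨le_rfl, hsT⟩, fun v hv => ?_⟩
    have : v = s := le_antisymm hv.2 hv.1
    rwa [this]
  have hS'ne : S'.Nonempty := ⟨s, hsS'⟩
  have hS'bdd : BddAbove S' := ⟨T, fun v hv => hv.1.2⟩
  set c := sSup S' with hcdef
  have hsc : s ≤ c := le_csSup hS'bdd hsS'
  have hcT : c ≤ T := csSup_le hS'ne fun v hv => hv.1.2
  obtain ⟨ρ, hρ, htrans⟩ := hloc c hsc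
  -- c ∈ S'
  have hcS' : c ∈ S' := by
    obtain ⟨u, huS', huc⟩ := exists_lt_of_lt_csSup hS'ne (show c - ρ < c by linarith)
    have huc' : u ≤ c := le_csSup hS'bdd huS'
    have hQu : Q u := huS'.2 u ⟨huS'.1.1, le_rfl⟩
    have hQc : Q c := by
      intro m
      have h1 := htrans u huS'.1.1 (abs_lt.mpr ⟨by linarith, by linarith⟩) m
      exact (hQu m).trans h1
    refine ⟨⟨hsc, hcT⟩, fun v hv => ?_⟩
    rcases le_or_gt v u with h | h
    · exact huS'.2 v ⟨hv.1, h⟩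
    · intro m
      have h1 := htrans v (hv.1) (abs_lt.mpr ⟨by linarith, by linarith [hv.2]⟩) m
      exact (hQc m).trans h1.symm
  -- c = T
  have hcT' : c = T := by
    by_contra h
    have hcltT : c < T := lt_of_le_of_ne hcT h
    set v := min T (c + ρ / 2) with hvdef
    have hvc : c < v := lt_min hcltT (by linarith)
    have hvS' : v ∈ S' := by
      refine ⟨⟨hsc.trans hvc.le, min_le_left _ _⟩, fun x hx => ?_⟩
      rcases le_or_gt x c with h1 | h1
      · exact hcS'.2 x ⟨hx.1, h1⟩
      · intro m
        have hxv : x ≤ v := hx.2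
        have hxc : |x - c| < ρ := by
          refine abs_lt.mpr ⟨by linarith, ?_⟩
          have : v ≤ c + ρ / 2 := min_le_right _ _
          linarith
        have h2 := htrans x hx.1 hxc m
        exact (hcS'.2 c ⟨hsc, le_rfl⟩ m).trans h2.symm
    have := le_csSup hS'bdd hvS'
    rw [← hcdef] at this
    linarith
  have hfin := hcS'.2 T ⟨hsT, hcT'.ge⟩
  exact hfin n


end Chunk7

end EFAux

/-- Lemma 4.3 (i): normal-family behaviour of an evolution family — any
sequence `φ_{s,t_n}` has a subsequence converging locally uniformly either to a
constant or to a winding-preserving injective holomorphic map into `𝔻*`. -/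
theorem evolutionFamily_normal_limits
    (d : ℝ≥0∞) (hd : 1 ≤ d) (D : CanonicalDomainSystem d) (φ : ℝ → ℝ → ℂ → ℂ)
    (hφ : IsEvolutionFamily d D φ) (s : ℝ) (hs : 0 ≤ s)
    (t : ℕ → ℝ) (ht : ∀ n, s ≤ t n) :
    ∃ σ : ℕ → ℕ, StrictMono σ ∧ ∃ ψ : ℂ → ℂ,
      (∀ K : Set ℂ, IsCompact K → K ⊆ stdAnnulus (D.r s) →
        TendstoUniformlyOn (fun n z => φ s (t (σ n)) z) ψ atTop K) ∧
      ((∃ c : ℂ, ∀ z ∈ stdAnnulus (D.r s), ψ z = c) ∨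
        (DifferentiableOn ℂ ψ (stdAnnulus (D.r s)) ∧ InjOn ψ (stdAnnulus (D.r s)) ∧
          MapsTo ψ (stdAnnulus (D.r s)) (stdAnnulus 0) ∧
          PreservesWinding ψ (stdAnnulus (D.r s)))) := by
  classical
  set A := stdAnnulus (D.r s) with hAdef
  have hAopen : IsOpen A := EFAux.isOpen_stdAnnulus _
  have hAne : A.Nonempty := EFAux.stdAnnulus_nonempty (D.r_nonneg s hs) (D.r_lt_one s hs)
  have hApre : IsPreconnected A := EFAux.isPreconnected_stdAnnulus (D.r_nonneg s hs)
  set F : ℕ → ℂ → ℂ := fun n z => φ s (t n) z with hFdef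
  have hFd : ∀ n, DifferentiableOn ℂ (F n) A := fun n => hφ.holo hs (ht n)
  have hFb : ∀ n, ∀ z ∈ A, ‖F n z‖ ≤ 1 := fun n z hz =>
    EFAux.phi_norm_le_one hφ hs (ht n) hz
  obtain ⟨σ, hσ, ψ, hconv⟩ := EFAux.montel hAopen hAne F hFd hFb
  refine ⟨σ, hσ, ψ, fun K hK hKA => hconv K hK hKA, ?_⟩
  by_cases hconst : ∃ c : ℂ, ∀ z ∈ A, ψ z = c
  · exact Or.inl hconst
  right
  push_neg at hconst
  have hψd : DifferentiableOn ℂ ψ A := by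
    have hTLU : TendstoLocallyUniformlyOn (fun n => F (σ n)) ψ atTop A :=
      (tendstoLocallyUniformlyOn_iff_forall_isCompact hAopen).mpr
        fun K hKA hK => hconv K hK hKA
    exact hTLU.differentiableOn (Eventually.of_forall fun n => hFd (σ n)) hAopen
  have hGconv : ∀ K : Set ℂ, IsCompact K → K ⊆ A →
      TendstoUniformlyOn (fun n => F (σ n)) ψ atTop K := hconv
  have hptw : ∀ z ∈ A, Tendsto (fun n => F (σ n) z) atTop (𝓝 (ψ z)) := by
    intro z hz
    exact (hconv {z} isCompact_singleton (singleton_subset_iff.mpr hz)).tendsto_at rfl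
  have hne0 : ∀ z ∈ A, ψ z ≠ 0 := by
    intro z0 hz0 h0
    obtain ⟨N, hN⟩ := EFAux.hurwitz_attains hAopen hApre (fun n => hFd (σ n)) hψd
      hGconv hz0 h0 (hconst 0) one_pos
    obtain ⟨a, haA, -, hFa⟩ := hN N le_rfl
    exact EFAux.phi_ne_zero hφ hs (ht (σ N)) haA hFa
  have hle1 : ∀ z ∈ A, ‖ψ z‖ ≤ 1 := fun z hz =>
    le_of_tendsto (hptw z hz).norm (Eventually.of_forall fun n => hFb (σ n) z hz)
  have hlt1 : ∀ z ∈ A, ‖ψ z‖ < 1 := by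
    intro z hz
    rcases lt_or_ge ‖ψ z‖ 1 with h | h
    · exact h
    exfalso
    have heq1 : ‖ψ z‖ = 1 := le_antisymm (hle1 z hz) h
    have hmax : IsMaxOn (norm ∘ ψ) A z := by
      intro y hy
      simp only [Function.comp_apply, mem_setOf_eq]
      rw [heq1]
      exact hle1 y hy
    have hcst := Complex.eqOn_of_isPreconnected_of_isMaxOn_norm hApre hAopen hψd hz hmax
    obtain ⟨z1, hz1A, hz1⟩ := hconst (ψ z)
    exact hz1 (hcst hz1A)
  have hinj : InjOn ψ A := by
    intro z1 hz1 z2 hz2 heqv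
    by_contra hne
    have hdz : 0 < dist z1 z2 := dist_pos.mpr hne
    obtain ⟨N1, hN1⟩ := EFAux.hurwitz_attains hAopen hApre (fun n => hFd (σ n)) hψd
      hGconv hz1 rfl (hconst (ψ z1)) (show 0 < dist z1 z2 / 2 by linarith)
    obtain ⟨N2, hN2⟩ := EFAux.hurwitz_attains hAopen hApre (fun n => hFd (σ n)) hψd
      hGconv hz2 heqv.symm (hconst (ψ z1)) (show 0 < dist z1 z2 / 2 by linarith)
    obtain ⟨a, haA, hadist, hFa⟩ := hN1 (max N1 N2) (le_max_left _ _)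
    obtain ⟨b, hbA, hbdist, hFb'⟩ := hN2 (max N1 N2) (le_max_right _ _)
    have hab : a ≠ b := by
      intro h
      have h1 := dist_triangle z1 a z2
      rw [dist_comm z1 a] at h1
      rw [h] at h1 hadist
      linarith
    exact hab (EFAux.phi_injOn hφ hd hs (ht (σ (max N1 N2))) haA hbA
      (hFa.trans hFb'.symm))
  refine ⟨hψd, hinj, ?_, ?_⟩
  · intro z hz
    exact ⟨norm_pos_iff.mpr (hne0 z hz), hlt1 z hz⟩
  · intro γ hγ m
    obtain ⟨hγc, hγcl, hγA⟩ := hγ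
    set Γ := γ '' Icc 0 1 with hΓdef
    have hΓcpt : IsCompact Γ := isCompact_Icc.image_of_continuousOn hγc
    have hΓA : Γ ⊆ A := by rintro z ⟨x, hx, rfl⟩; exact hγA x hx
    have hψγc : ContinuousOn (fun x => ψ (γ x)) (Icc 0 1) :=
      (hψd.continuousOn).comp hγc fun x hx => hγA x hx
    obtain ⟨x0, hx0I, hx0min⟩ := isCompact_Icc.exists_isMinOn ⟨0, by norm_num⟩
      hψγc.norm
    set m0 := ‖ψ (γ x0)‖ with hm0def
    have hm0pos : 0 < m0 := norm_pos_iff.mpr (hne0 (γ x0) (hγA x0 hx0I))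
    have huc := hGconv Γ hΓcpt hΓA
    rw [Metric.tendstoUniformlyOn_iff] at huc
    obtain ⟨N, hN⟩ := (huc (m0 / 3) (by linarith)).exists_forall_of_atTop
    have hNs : ∀ x ∈ Icc (0:ℝ) 1, dist (ψ (γ x)) (F (σ N) (γ x)) < m0 / 3 :=
      fun x hx => hN N le_rfl (γ x) ⟨x, hx, rfl⟩
    have hchain := EFAux.winding_eq_of_evolution hφ hd hs (ht (σ N))
      ⟨hγc, hγcl, hγA⟩
    have hFγc : ContinuousOn (fun x => F (σ N) (γ x)) (Icc 0 1) :=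
      ((hFd (σ N)).continuousOn).comp hγc fun x hx => hγA x hx
    have hFγcl : F (σ N) (γ 0) = F (σ N) (γ 1) := by rw [hγcl]
    have hψγcl : ψ (γ 0) = ψ (γ 1) := by rw [hγcl]
    have hlow : ∀ x ∈ Icc (0:ℝ) 1, m0 ≤ ‖ψ (γ x)‖ := fun x hx => hx0min hx
    constructor
    · intro hwn
      have h1 := (hchain m).mp hwn
      refine EFAux.winding_transfer hFγc hψγc hFγcl hψγcl ?_ h1
      intro x hx
      have h2 := hNs x hx
      rw [dist_eq_norm] at h2
      have h3 : ‖ψ (γ x) - F (σ N) (γ x)‖ < m0 / 3 := h2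
      have h4 : m0 - m0 / 3 ≤ ‖F (σ N) (γ x)‖ := by
        have h5 := norm_sub_norm_le (ψ (γ x)) (F (σ N) (γ x))
        have h6 := hlow x hx
        linarith
      linarith
    · intro hwn
      refine (hchain m).mpr ?_
      refine EFAux.winding_transfer hψγc hFγc hψγcl hFγcl ?_ hwn
      intro x hx
      have h2 := hNs x hx
      rw [dist_eq_norm] at h2
      have h3 : ‖F (σ N) (γ x) - ψ (γ x)‖ < m0 / 3 := by
        rw [norm_sub_rev]; exact h2
      have h6 := hlow x hx
      linarith
end
end
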